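/- arXiv:1311.2497 — 3 statements merged into one kernel-verified Lean document; each statement's English description precedes it below -/
import Mathlib

section
/- Let n ≥ 1, N ≥ 1 and d ≥ 1. The following are equivalent: (i) d ≥ 2N−1; (ii) for every choice of nonzero, pairwise non-proportional vectors p_1,…,p_N ∈ ℂ^{n+1}, the linear subspace W = {f ∈ V_{d,n} : f is singular at each p_j} of V_{d,n} has complex dimension binom(d+n, n) − N(n+1). -/
open MvPolynomial
/-- `V_{d,n}`: the space of homogeneous polynomials of degree `d` in `x_0, …, x_n`. -/
noncomputable def Vdn (n d : ℕ) : Submodule ℂ (MvPolynomial (Fin (n+1)) ℂ) :=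
  MvPolynomial.homogeneousSubmodule (Fin (n+1)) ℂ d

/-- `f` is singular at the point `p ∈ ℂ^{n+1}`: all partial derivatives vanish at `p`. -/
def SingularAt {n : ℕ} (f : MvPolynomial (Fin (n+1)) ℂ) (p : Fin (n+1) → ℂ) : Prop :=
  ∀ i, MvPolynomial.eval p (MvPolynomial.pderiv i f) = 0

/-- The subspace `W` of `V_{d,n}` of polynomials singular at each of the points
`p 0, …, p (N-1)`. -/
noncomputable def Wsub (n d N : ℕ) (p : Fin N → (Fin (n+1) → ℂ)) :
    Submodule ℂ (Vdn n d) where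
  carrier := {f | ∀ j, SingularAt (f : MvPolynomial (Fin (n+1)) ℂ) (p j)}
  add_mem' := by
    intro a b ha hb j i
    simp only [Submodule.coe_add, map_add, ha j i, hb j i, add_zero]
  zero_mem' := by
    intro j i
    simp
  smul_mem' := by
    intro c f hf j i
    rw [SetLike.val_smul, Derivation.map_smul, MvPolynomial.smul_eval, hf j i, mul_zero]



def degSet (n d : ℕ) : Set (Fin (n+1) →₀ ℕ) := { s | s.degree = d }

noncomputable def degEquiv (n d : ℕ) : degSet n d ≃ Sym (Fin (n+1)) d := by
  refine Equiv.subtypeEquiv (Multiset.toFinsupp.toEquiv.symm) ?_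
  intro m
  show m.degree = d ↔ _
  constructor
  · intro h
    show Multiset.card (Finsupp.toMultiset m) = d
    rw [Finsupp.card_toMultiset]
    rwa [show m.degree = m.sum fun _ => id by simp [Finsupp.degree_apply, Finsupp.sum]] at h
  · intro h
    have : Multiset.card (Finsupp.toMultiset m) = d := h
    rw [Finsupp.card_toMultiset] at this
    rw [show m.degree = m.sum fun _ => id by simp [Finsupp.degree_apply, Finsupp.sum]]
    exact this

noncomputable instance (n d : ℕ) : Fintype (degSet n d) :=
  Fintype.ofEquiv _ (degEquiv n d).symm

noncomputable def VdnBasis (n d : ℕ) : Module.Basis (degSet n d) ℂ (Vdn n d) :=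
  (MvPolynomial.basisRestrictSupport ℂ (degSet n d)).map
    (LinearEquiv.ofEq _ _ (by
      rw [Vdn, homogeneousSubmodule_eq_finsupp_supported]; rfl))

instance (n d : ℕ) : FiniteDimensional ℂ (Vdn n d) :=
  Module.Finite.of_basis (VdnBasis n d)

lemma finrank_Vdn (n d : ℕ) : Module.finrank ℂ (Vdn n d) = (d+n).choose n := by
  rw [Module.finrank_eq_card_basis (VdnBasis n d), Fintype.card_congr (degEquiv n d),
    Sym.card_sym_eq_choose]
  rw [Fintype.card_fin]
  have h1 : n + 1 + d - 1 = d + n := by omega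
  rw [h1]; rw [show (d+n).choose d = (d+n).choose (d+n-d) from (Nat.choose_symm (by omega)).symm]
  congr 1; omega


variable {n : ℕ}



noncomputable def gradMap (n d N : ℕ) (p : Fin N → (Fin (n+1) → ℂ)) :
    Vdn n d →ₗ[ℂ] (Fin N → Fin (n+1) → ℂ) where
  toFun f := fun j i => eval (p j) (pderiv i (f : MvPolynomial (Fin (n+1)) ℂ))
  map_add' a b := by funext j i; simp
  map_smul' c f := by
    funext j i
    simp only [SetLike.val_smul, Derivation.map_smul, MvPolynomial.smul_eval, RingHom.id_apply,
      Pi.smul_apply, smul_eq_mul]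



lemma eval_monomial' (q : Fin (n+1) → ℂ) (β : Fin (n+1) →₀ ℕ) (r : ℂ) :
    eval q (monomial β r) = r * ∏ l, q l ^ β l := by
  rw [eval_monomial, Finsupp.prod_fintype]
  intro l; exact pow_zero _

lemma degree_eq_sum_univ (α : Fin (n+1) →₀ ℕ) : α.degree = ∑ l, α l := by
  rw [Finsupp.degree]
  exact Finset.sum_subset (Finset.subset_univ _) (fun x _ hx => by
    simpa using Finsupp.notMem_support_iff.mp hx)

lemma euler_eval (q : Fin (n+1) → ℂ) (f : MvPolynomial (Fin (n+1)) ℂ) (m : ℕ)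
    (hf : f.IsHomogeneous m) :
    ∑ i, q i * eval q (pderiv i f) = (m : ℂ) * eval q f := by
  conv_lhs => rw [f.as_sum]
  conv_rhs => rw [f.as_sum]
  simp only [map_sum, Finset.mul_sum]
  rw [Finset.sum_comm]
  refine Finset.sum_congr rfl (fun α hα => ?_)
  have hdeg : ∑ l, α l = m := by
    rw [← degree_eq_sum_univ]
    simpa [Finsupp.degree_eq_weight_one, Pi.one_def] using hf (mem_support_iff.mp hα)
  set c := coeff α f with hc
  -- per monomial
  have key : ∀ i : Fin (n+1), q i * eval q (pderiv i (monomial α c))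
      = (α i : ℂ) * (c * ∏ l, q l ^ α l) := by
    intro i
    rw [pderiv_monomial, eval_monomial']
    rcases Nat.eq_zero_or_pos (α i) with h0 | hpos
    · simp [h0]
    · obtain ⟨k, hk⟩ : ∃ k, α i = k + 1 := ⟨α i - 1, by omega⟩
      have hβ : ∀ l, l ≠ i → ((α - Finsupp.single i 1 : Fin (n+1) →₀ ℕ)) l = α l := by
        intro l hl
        simp [Finsupp.tsub_apply, Finsupp.single_apply, Ne.symm hl]
      have hβi : ((α - Finsupp.single i 1 : Fin (n+1) →₀ ℕ)) i = k := by
        simp [Finsupp.tsub_apply, Finsupp.single_apply]; omega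
      rw [← Finset.mul_prod_erase Finset.univ _ (Finset.mem_univ i),
        ← Finset.mul_prod_erase Finset.univ (fun l => q l ^ α l) (Finset.mem_univ i)]
      rw [Finset.prod_congr rfl (fun l hl => by
        rw [hβ l (Finset.ne_of_mem_erase hl)])]
      rw [hβi, hk]
      push_cast
      ring
  rw [Finset.sum_congr rfl (fun i _ => key i)]
  rw [← Finset.sum_mul, ← Nat.cast_sum, hdeg, eval_monomial']



lemma sum_aux (x : Fin (n+1) → ℂ) (i0 i1 : Fin (n+1)) (c0 c1 : ℂ) :
    ∑ l, ((if l = i1 then c1 else 0) + (if l = i0 then c0 else 0)) * x l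
      = c1 * x i1 + c0 * x i0 := by
  simp only [add_mul, Finset.sum_add_distrib, ite_mul, zero_mul]
  rw [Finset.sum_ite_eq' Finset.univ i1 (fun l => c1 * x l),
    Finset.sum_ite_eq' Finset.univ i0 (fun l => c0 * x l)]
  simp

lemma exists_sep (x y : Fin (n+1) → ℂ) (hx : x ≠ 0) (hxy : ∀ c : ℂ, y ≠ c • x) :
    ∃ a : Fin (n+1) → ℂ, (∑ i, a i * x i) = 0 ∧ (∑ i, a i * y i) = 1 := by
  obtain ⟨i0, hi0⟩ : ∃ i0, x i0 ≠ 0 := by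
    by_contra h; push_neg at h; exact hx (funext h)
  obtain ⟨i1, hi1⟩ : ∃ i1, y i1 * x i0 - y i0 * x i1 ≠ 0 := by
    by_contra h; push_neg at h
    apply hxy (y i0 / x i0)
    funext l
    have := h l
    rw [Pi.smul_apply, smul_eq_mul, div_mul_eq_mul_div, eq_div_iff hi0]
    linear_combination this
  set c := y i1 * x i0 - y i0 * x i1 with hc
  refine ⟨fun l => c⁻¹ * ((if l = i1 then x i0 else 0) + (if l = i0 then -x i1 else 0)), ?_, ?_⟩
  · rw [Finset.sum_congr rfl (fun l _ => by rw [mul_assoc]), ← Finset.mul_sum, sum_aux]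
    ring_nf
  · rw [Finset.sum_congr rfl (fun l _ => by rw [mul_assoc]), ← Finset.mul_sum, sum_aux]
    field_simp
    rw [hc]; ring

lemma exists_one (y : Fin (n+1) → ℂ) (hy : y ≠ 0) : ∃ a : Fin (n+1) → ℂ, (∑ i, a i * y i) = 1 := by
  obtain ⟨i0, hi0⟩ : ∃ i0, y i0 ≠ 0 := by
    by_contra h; push_neg at h; exact hy (funext h)
  refine ⟨fun l => if l = i0 then (y i0)⁻¹ else 0, ?_⟩
  rw [Finset.sum_congr rfl (fun l _ => by rw [ite_mul, zero_mul]),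
    Finset.sum_ite_eq' Finset.univ i0 (fun l => (y i0)⁻¹ * y l)]
  simp [inv_mul_cancel₀ hi0]



noncomputable def linform (n : ℕ) (a : Fin (n+1) → ℂ) : MvPolynomial (Fin (n+1)) ℂ :=
  ∑ i, C (a i) * X i

lemma linform_isHomogeneous (a : Fin (n+1) → ℂ) : (linform n a).IsHomogeneous 1 :=
  IsHomogeneous.sum _ _ _ (fun i _ => isHomogeneous_C_mul_X (a i) i)

lemma eval_linform (a q : Fin (n+1) → ℂ) : eval q (linform n a) = ∑ i, a i * q i := by
  simp [linform]

lemma pderiv_linform (a : Fin (n+1) → ℂ) (i : Fin (n+1)) :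
    pderiv i (linform n a) = C (a i) := by
  rw [linform, map_sum]
  rw [Finset.sum_congr rfl (fun k _ => ?_), Finset.sum_ite_eq' Finset.univ i (fun k => C (a k))]
  · simp
  · rw [pderiv_mul, pderiv_C, pderiv_X]
    simp only [mul_zero, zero_mul, add_zero, zero_add, mul_comm]
    by_cases h : k = i
    · subst h; simp [Pi.single_eq_same]
    · simp [Pi.single_eq_of_ne h, h]

lemma vanish_lemma (q : Fin (n+1) → ℂ) (u v : MvPolynomial (Fin (n+1)) ℂ)
    (hu : eval q u = 0) (i : Fin (n+1)) : eval q (pderiv i (u * u * v)) = 0 := by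
  simp [pderiv_mul, hu]

/-- The key construction: a form of degree `d` with prescribed gradient at `p j`
and vanishing gradient at the other points. -/
lemma exists_form (d N : ℕ) (hd : 1 ≤ d) (hdN : 2 * N - 1 ≤ d) (hN : 1 ≤ N)
    (p : Fin N → (Fin (n+1) → ℂ)) (hp0 : ∀ j, p j ≠ 0)
    (hprop : ∀ j j', j ≠ j' → ∀ c : ℂ, p j ≠ c • p j')
    (j : Fin N) (v : Fin (n+1) → ℂ) :
    ∃ f : MvPolynomial (Fin (n+1)) ℂ, f.IsHomogeneous d ∧
      (∀ i, eval (p j) (pderiv i f) = v i) ∧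
      (∀ k, k ≠ j → ∀ i, eval (p k) (pderiv i f) = 0) := by
  -- separating linear forms
  have sep : ∀ k : Fin N, k ≠ j → ∃ a : Fin (n+1) → ℂ,
      (∑ i, a i * p k i) = 0 ∧ (∑ i, a i * p j i) = 1 := by
    intro k hk
    exact exists_sep (p k) (p j) (hp0 k) (fun c => hprop j k (fun h => hk h.symm) c)
  choose! a ha using sep
  obtain ⟨a0, ha0⟩ := exists_one (p j) (hp0 j)
  set e := d - 2 * (N - 1) with he
  have hee : 1 ≤ e := by omega
  set ℓ0 : MvPolynomial (Fin (n+1)) ℂ := linform n a0 with hℓ0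
  set h : MvPolynomial (Fin (n+1)) ℂ :=
    ∏ k ∈ Finset.univ.erase j, (linform n (a k) * linform n (a k)) with hh
  set g : MvPolynomial (Fin (n+1)) ℂ := h * ℓ0 ^ (e - 1) with hg
  have hhom_h : h.IsHomogeneous (2 * (N - 1)) := by
    have := IsHomogeneous.prod (Finset.univ.erase j)
      (fun k => linform n (a k) * linform n (a k)) (fun _ => 2)
      (fun k _ => (linform_isHomogeneous (a k)).mul (linform_isHomogeneous (a k)))
    rw [Finset.sum_const, Finset.card_erase_of_mem (Finset.mem_univ j),
      Finset.card_univ, Fintype.card_fin, smul_eq_mul] at this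
    convert this using 1
    omega
  have hhom_g : g.IsHomogeneous (d - 1) := by
    have := hhom_h.mul ((linform_isHomogeneous a0).pow (e - 1))
    convert this using 1
    omega
  have heval_h : eval (p j) h = 1 := by
    rw [hh, map_prod]
    refine Finset.prod_eq_one (fun k hk => ?_)
    rw [map_mul, eval_linform, (ha k (Finset.ne_of_mem_erase hk)).2, mul_one]
  have heval_ℓ0 : eval (p j) ℓ0 = 1 := by rw [hℓ0, eval_linform, ha0]
  have heval_g : eval (p j) g = 1 := by
    rw [hg, map_mul, map_pow, heval_h, heval_ℓ0, one_pow, mul_one]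
  set w : Fin (n+1) → ℂ := fun i => eval (p j) (pderiv i g) with hw
  have heuler : ∑ i, p j i * w i = ((d : ℂ) - 1) := by
    have := euler_eval (p j) g (d - 1) hhom_g
    rw [heval_g, mul_one] at this
    rw [hw]
    rw [this]
    push_cast [Nat.cast_sub hd]
    ring
  set t : ℂ := (∑ i, v i * p j i) / d with ht
  set b : Fin (n+1) → ℂ := fun i => v i - t * w i with hb
  have hd0 : (d : ℂ) ≠ 0 := Nat.cast_ne_zero.mpr (by omega)
  have hbp : ∑ i, b i * p j i = t := by
    have h1 : ∑ i, b i * p j i = (∑ i, v i * p j i) - t * ∑ i, p j i * w i := by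
      rw [Finset.mul_sum, ← Finset.sum_sub_distrib]
      refine Finset.sum_congr rfl (fun i _ => ?_)
      simp only [hb]; ring
    rw [h1, heuler, ht]
    field_simp
    ring
  refine ⟨g * linform n b, ?_, ?_, ?_⟩
  · have := hhom_g.mul (linform_isHomogeneous b)
    convert this using 1
    omega
  · intro i
    have expand : eval (p j) (pderiv i (g * linform n b))
        = eval (p j) (pderiv i g) * eval (p j) (linform n b)
          + eval (p j) g * eval (p j) (pderiv i (linform n b)) := by
      rw [pderiv_mul, map_add, (eval (p j)).map_mul, (eval (p j)).map_mul]
    have hwi : eval (p j) (pderiv i g) = w i := rfl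
    rw [expand, heval_g, pderiv_linform, eval_C, eval_linform, hbp, hwi]
    simp only [hb]
    ring
  · intro k hk i
    have hmem : k ∈ Finset.univ.erase j := Finset.mem_erase.mpr ⟨hk, Finset.mem_univ k⟩
    set r : MvPolynomial (Fin (n+1)) ℂ :=
      ∏ m ∈ (Finset.univ.erase j).erase k, (linform n (a m) * linform n (a m)) with hr
    have hsplit : h = (linform n (a k) * linform n (a k)) * r := by
      rw [hh, hr, Finset.mul_prod_erase (Finset.univ.erase j)
        (fun m => linform n (a m) * linform n (a m)) hmem]
    have : g * linform n b = (linform n (a k) * linform n (a k)) *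
        (r * (ℓ0 ^ (e-1) * linform n b)) := by
      rw [hg, hsplit, mul_assoc, mul_assoc]
    rw [this]
    have hu : eval (p k) (linform n (a k)) = 0 := by rw [eval_linform, (ha k hk).1]
    exact vanish_lemma (p k) _ _ hu i




def pt (n : ℕ) (j : ℂ) : Fin (n+1) → ℂ := fun l => if l = 0 then 1 else if l = 1 then j else 0

noncomputable def abn (n d : ℕ) (b : Fin (d+1)) : Fin (n+1) →₀ ℕ :=
  Finsupp.single 0 (d - (b:ℕ)) + Finsupp.single 1 (b:ℕ)

noncomputable def coefc (d : ℕ) (j : ℂ) (i : Fin 2) (b : Fin (d+1)) : ℂ :=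
  if i = 0 then ((d:ℂ) - ((b:ℕ):ℂ)) * j^(b:ℕ) else ((b:ℕ):ℂ) * j^((b:ℕ)-1)

def emb (n : ℕ) : Fin 2 → Fin (n+1) := fun i => if i = 0 then 0 else 1

section binary
variable (hn : 1 ≤ n)
include hn

lemma fin_one_ne_zero : (1 : Fin (n+1)) ≠ 0 := by
  rw [Ne, Fin.one_eq_zero_iff]; omega

lemma prod_pt (j : ℂ) (x y : ℕ) :
    ∏ m, (pt n j m) ^ ((Finsupp.single (0 : Fin (n+1)) x + Finsupp.single 1 y : Fin (n+1) →₀ ℕ) m)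
      = j ^ y := by
  rw [Finset.prod_eq_single_of_mem (1 : Fin (n+1)) (Finset.mem_univ 1) ?_]
  · rw [Finsupp.add_apply, Finsupp.single_apply, Finsupp.single_apply,
      if_neg (fun h => fin_one_ne_zero hn h.symm), if_pos rfl, zero_add]
    rw [pt, if_neg (fin_one_ne_zero hn), if_pos rfl]
  · intro m _ hm
    by_cases hm0 : m = 0
    · subst hm0
      rw [pt]
      simp
    · rw [Finsupp.add_apply, Finsupp.single_apply, Finsupp.single_apply,
        if_neg (fun h => hm0 h.symm), if_neg (fun h => hm h.symm), pt, if_neg hm0, if_neg hm]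
      exact pow_zero 0

omit hn in
lemma pt_zero (x : ℂ) : pt n x 0 = 1 := by
  rw [pt, if_pos rfl]
lemma pt_one (x : ℂ) : pt n x 1 = x := by
  rw [pt, if_neg (fin_one_ne_zero hn), if_pos rfl]

lemma abn_apply_one (d : ℕ) (b : Fin (d+1)) : abn n d b 1 = (b : ℕ) := by
  rw [abn, Finsupp.add_apply, Finsupp.single_apply, Finsupp.single_apply,
    if_neg (fun h => fin_one_ne_zero hn h.symm), if_pos rfl, zero_add]

lemma abn_apply_zero (d : ℕ) (b : Fin (d+1)) : abn n d b 0 = d - (b:ℕ) := by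
  rw [abn, Finsupp.add_apply, Finsupp.single_apply, Finsupp.single_apply,
    if_pos rfl, if_neg (fin_one_ne_zero hn), add_zero]

lemma abn_apply_other (d : ℕ) (b : Fin (d+1)) (l : Fin (n+1)) (h0 : l ≠ 0) (h1 : l ≠ 1) :
    abn n d b l = 0 := by
  rw [abn, Finsupp.add_apply, Finsupp.single_apply, Finsupp.single_apply,
    if_neg (fun h => h0 h.symm), if_neg (fun h => h1 h.symm), add_zero]

/-- The key factorization identity for monomials. -/
lemma factor_monomial (d : ℕ) (j : ℂ) (i : Fin 2) (α : Fin (n+1) →₀ ℕ) (c : ℂ)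
    (hdeg : ∑ l, α l = d) :
    eval (pt n j) (pderiv (emb n i) (monomial α c))
      = ∑ b : Fin (d+1), coefc d j i b * (if α = abn n d b then c else 0) := by
  by_cases hbin : ∀ l : Fin (n+1), l ≠ 0 → l ≠ 1 → α l = 0
  · -- binary monomial
    have hBle : α 1 ≤ d := by
      rw [← hdeg]
      exact Finset.single_le_sum (fun l _ => Nat.zero_le _) (Finset.mem_univ 1)
    set b0 : Fin (d+1) := ⟨α 1, by omega⟩ with hb0
    have hsum01 : α 0 + α 1 = d := by
      rw [← hdeg]
      rw [show (∑ l, α l) = ∑ l ∈ ({0,1} : Finset (Fin (n+1))), α l from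
        (Finset.sum_subset (Finset.subset_univ _) (fun x _ hx => by
          simp only [Finset.mem_insert, Finset.mem_singleton, not_or] at hx
          exact hbin x hx.1 hx.2)).symm]
      rw [Finset.sum_pair (fun h => fin_one_ne_zero hn h.symm)]
    have hA : α 0 = d - α 1 := by omega
    have hαeq : α = abn n d b0 := by
      ext l
      by_cases h0 : l = 0
      · subst h0; rw [abn_apply_zero hn]; exact hA
      by_cases h1 : l = 1
      · subst h1; rw [abn_apply_one hn]
      · rw [abn_apply_other hn d b0 l h0 h1]; exact hbin l h0 h1
    have huniq : ∀ b : Fin (d+1), (α = abn n d b) ↔ b = b0 := by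
      intro b
      constructor
      · intro h
        have h1 : α 1 = (b:ℕ) := by rw [h, abn_apply_one hn]
        rw [hb0]
        ext
        simp [← h1]
      · intro h; rw [h, hαeq]
    have hterm : ∀ b : Fin (d+1), coefc d j i b * (if α = abn n d b then c else 0)
        = if b = b0 then coefc d j i b * c else 0 := by
      intro b
      by_cases hb : b = b0
      · rw [if_pos hb, if_pos ((huniq b).mpr hb)]
      · rw [if_neg hb, if_neg (fun h => hb ((huniq b).mp h)), mul_zero]
    rw [Finset.sum_congr rfl (fun b _ => hterm b),
      Finset.sum_ite_eq' Finset.univ b0 (fun b => coefc d j i b * c),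
      if_pos (Finset.mem_univ b0)]
    have hb0v : (b0 : ℕ) = α 1 := rfl
    by_cases hi : i = 0
    · subst hi
      have hemb : emb n 0 = 0 := rfl
      rw [hemb, pderiv_monomial, eval_monomial']
      have hβ : (α - Finsupp.single 0 1 : Fin (n+1) →₀ ℕ)
          = Finsupp.single 0 (α 0 - 1) + Finsupp.single 1 (α 1) := by
        ext l
        rw [Finsupp.tsub_apply, Finsupp.add_apply]
        by_cases h0 : l = 0
        · subst h0
          simp [Finsupp.single_apply, (fin_one_ne_zero hn)]
        by_cases h1 : l = 1
        · subst h1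
          have h01 : (0 : Fin (n+1)) ≠ 1 := fun h => fin_one_ne_zero hn h.symm
          simp [Finsupp.single_apply, h01]
        · have e0 : (0 : Fin (n+1)) ≠ l := fun h => h0 h.symm
          have e1 : (1 : Fin (n+1)) ≠ l := fun h => h1 h.symm
          simp [Finsupp.single_apply, e0, e1, hbin l h0 h1]
      rw [hβ, prod_pt hn]
      rw [coefc, if_pos rfl, hb0v, hA]
      push_cast [Nat.cast_sub hBle]
      ring
    · have hi1 : i = 1 := Fin.ext (by have := i.isLt; have : i.val ≠ 0 := fun h => hi (Fin.ext h); omega)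
      subst hi1
      have hemb : emb n 1 = 1 := rfl
      rw [hemb, pderiv_monomial, eval_monomial']
      have hβ : (α - Finsupp.single 1 1 : Fin (n+1) →₀ ℕ)
          = Finsupp.single 0 (α 0) + Finsupp.single 1 (α 1 - 1) := by
        ext l
        rw [Finsupp.tsub_apply, Finsupp.add_apply]
        by_cases h0 : l = 0
        · subst h0
          simp [Finsupp.single_apply, (fin_one_ne_zero hn)]
        by_cases h1 : l = 1
        · subst h1
          have h01 : (0 : Fin (n+1)) ≠ 1 := fun h => fin_one_ne_zero hn h.symm
          simp [Finsupp.single_apply, h01]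
        · have e0 : (0 : Fin (n+1)) ≠ l := fun h => h0 h.symm
          have e1 : (1 : Fin (n+1)) ≠ l := fun h => h1 h.symm
          simp [Finsupp.single_apply, e0, e1, hbin l h0 h1]
      rw [hβ, prod_pt hn]
      rw [coefc, if_neg (by decide), hb0v]
      push_cast
      ring
  · -- non-binary monomial: both sides vanish
    push_neg at hbin
    obtain ⟨l, hl0, hl1, hlne⟩ := hbin
    have hRHS : ∑ b : Fin (d+1), coefc d j i b * (if α = abn n d b then c else 0) = 0 := by
      refine Finset.sum_eq_zero (fun b _ => ?_)
      have hne : α ≠ abn n d b := fun h => hlne (by rw [h, abn_apply_other hn d b l hl0 hl1])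
      rw [if_neg hne, mul_zero]
    rw [hRHS, pderiv_monomial, eval_monomial']
    have hfac : (pt n j l) ^ ((α - Finsupp.single (emb n i) 1 : Fin (n+1) →₀ ℕ) l) = 0 := by
      have hle : l ≠ emb n i := by
        rw [emb]
        by_cases h : i = 0
        · rw [if_pos h]; exact hl0
        · rw [if_neg h]; exact hl1
      have hexp : (α - Finsupp.single (emb n i) 1 : Fin (n+1) →₀ ℕ) l = α l := by
        have hle' : emb n i ≠ l := fun h => hle h.symm
        rw [Finsupp.tsub_apply, Finsupp.single_apply, if_neg hle']
        omega
      rw [hexp, pt, if_neg hl0, if_neg hl1]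
      exact zero_pow hlne
    rw [Finset.prod_eq_zero (Finset.mem_univ l) hfac, mul_zero]

end binary

lemma factor_eval (hn : 1 ≤ n) (d : ℕ) (f : MvPolynomial (Fin (n+1)) ℂ)
    (hf : f.IsHomogeneous d) (j : ℂ) (i : Fin 2) :
    eval (pt n j) (pderiv (emb n i) f)
      = ∑ b : Fin (d+1), coefc d j i b * coeff (abn n d b) f := by
  conv_lhs => rw [f.as_sum]
  rw [map_sum, map_sum]
  rw [Finset.sum_congr rfl (fun α hα => factor_monomial hn d j i α (coeff α f) (by
    rw [← degree_eq_sum_univ]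
    simpa [Finsupp.degree_eq_weight_one, Pi.one_def] using hf (mem_support_iff.mp hα)))]
  rw [Finset.sum_comm]
  refine Finset.sum_congr rfl (fun b _ => ?_)
  rw [← Finset.mul_sum]
  congr 1
  rw [Finset.sum_ite_eq' f.support (abn n d b) (fun α => coeff α f)]
  by_cases h : abn n d b ∈ f.support
  · rw [if_pos h]
  · rw [if_neg h, notMem_support_iff.mp h]

noncomputable def rhoMap (n d : ℕ) : Vdn n d →ₗ[ℂ] (Fin (d+1) → ℂ) where
  toFun f := fun b => coeff (abn n d b) (f : MvPolynomial (Fin (n+1)) ℂ)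
  map_add' a b := by funext b'; simp [coeff_add]
  map_smul' c f := by funext b'; simp [coeff_smul]

noncomputable def tauMap (n d N : ℕ) : (Fin (d+1) → ℂ) →ₗ[ℂ] (Fin N → Fin 2 → ℂ) where
  toFun y := fun j i => ∑ b, coefc d ((j:ℕ):ℂ) i b * y b
  map_add' a b := by
    funext j i
    simp [mul_add, Finset.sum_add_distrib]
  map_smul' c y := by
    funext j i
    simp only [Pi.smul_apply, smul_eq_mul, RingHom.id_apply, Finset.mul_sum]
    exact Finset.sum_congr rfl (fun b _ => by ring)

def piMap (n N : ℕ) : (Fin N → Fin (n+1) → ℂ) →ₗ[ℂ] (Fin N → Fin 2 → ℂ) where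
  toFun y := fun j i => y j (emb n i)
  map_add' a b := rfl
  map_smul' c y := rfl

lemma piMap_surjective (hn : 1 ≤ n) (N : ℕ) : Function.Surjective ⇑(piMap n N) := by
  intro y
  refine ⟨fun j l => if l = 0 then y j 0 else if l = 1 then y j 1 else 0, ?_⟩
  funext j i
  show (if emb n i = 0 then y j 0 else if emb n i = 1 then y j 1 else 0) = y j i
  by_cases hi : i = 0
  · subst hi
    rw [show emb n 0 = 0 from rfl, if_pos rfl]
  · have hi1 : i = 1 := Fin.ext (by
      have := i.isLt
      have : i.val ≠ 0 := fun h => hi (Fin.ext h)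
      omega)
    subst hi1
    rw [show emb n 1 = 1 from rfl, if_neg (fin_one_ne_zero hn), if_pos rfl]

lemma wsub_eq_ker (n d N : ℕ) (p : Fin N → (Fin (n+1) → ℂ)) :
    Wsub n d N p = LinearMap.ker (gradMap n d N p) := by
  ext f
  constructor
  · intro hf
    rw [LinearMap.mem_ker]
    funext j i
    exact hf j i
  · intro hf j i
    exact congrFun (congrFun (LinearMap.mem_ker.mp hf) j) i

lemma finrank_pi_pi (N m : ℕ) : Module.finrank ℂ (Fin N → Fin m → ℂ) = N * m := by
  rw [Module.finrank_pi_fintype ℂ]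
  simp [Module.finrank_pi, Finset.sum_const, smul_eq_mul]

/-- Requiring singularity at `N` distinct points of `ℙⁿ` imposes exactly `N(n+1)` independent
conditions on degree-`d` forms (for every configuration of points) if and only if
`d ≥ 2N−1`. The dimension count `dim W = binom(d+n,n) − N(n+1)` is stated additively to
avoid truncated subtraction. -/
theorem dim_singular_subspace_iff (n N d : ℕ) (hn : 1 ≤ n) (hN : 1 ≤ N) (hd : 1 ≤ d) :
    2 * N - 1 ≤ d ↔
      ∀ p : Fin N → (Fin (n+1) → ℂ), (∀ j, p j ≠ 0) →
        (∀ j j', j ≠ j' → ∀ c : ℂ, p j ≠ c • p j') →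
        Module.finrank ℂ (Wsub n d N p) + N * (n+1) = Nat.choose (d+n) n := by
  constructor
  · intro hdN p hp0 hprop
    have hker := wsub_eq_ker n d N p
    have hsurj : Function.Surjective ⇑(gradMap n d N p) := by
      intro y
      have hmem : ∀ j, Pi.single j (y j) ∈ LinearMap.range (gradMap n d N p) := by
        intro j
        obtain ⟨f, hfh, hfj, hfk⟩ := exists_form d N hd hdN hN p hp0 hprop j (y j)
        refine ⟨⟨f, (mem_homogeneousSubmodule _ _).mpr hfh⟩, ?_⟩
        funext k i
        show eval (p k) (pderiv i f) = (Pi.single j (y j) : Fin N → Fin (n+1) → ℂ) k i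
        by_cases hkj : k = j
        · subst hkj
          rw [Pi.single_eq_same]
          exact hfj i
        · have h0 : (Pi.single j (y j) : Fin N → Fin (n+1) → ℂ) k i = 0 := by
            rw [Pi.single_eq_of_ne hkj]
            rfl
          rw [h0]
          exact hfk k hkj i
      have hy : y ∈ LinearMap.range (gradMap n d N p) := by
        rw [← Finset.univ_sum_single y]
        exact Submodule.sum_mem _ (fun j _ => hmem j)
      exact hy
    have hrn := LinearMap.finrank_range_add_finrank_ker (gradMap n d N p)
    rw [LinearMap.range_eq_top.mpr hsurj, finrank_top, finrank_pi_pi, finrank_Vdn] at hrn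
    rw [hker]
    omega
  · intro H
    by_contra hdN
    have hN2 : d + 2 ≤ 2 * N := by omega
    set p : Fin N → Fin (n+1) → ℂ := fun j => pt n ((j:ℕ):ℂ) with hp
    have h10 : (1 : Fin (n+1)) ≠ 0 := fin_one_ne_zero hn
    have hp0 : ∀ j, p j ≠ 0 := by
      intro j h
      have h2 := congrFun h 0
      simp only [hp] at h2
      rw [pt_zero] at h2
      exact one_ne_zero (h2.trans rfl)
    have hprop : ∀ j j', j ≠ j' → ∀ c : ℂ, p j ≠ c • p j' := by
      intro j j' hjj c h
      have h0 := congrFun h 0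
      have h1 := congrFun h 1
      simp only [hp, Pi.smul_apply, smul_eq_mul] at h0 h1
      rw [pt_zero, pt_zero, mul_one] at h0
      rw [pt_one hn, pt_one hn] at h1
      rw [← h0, one_mul] at h1
      exact hjj (Fin.ext (Nat.cast_injective h1))
    have HH := H p hp0 hprop
    rw [wsub_eq_ker n d N p] at HH
    have hrn := LinearMap.finrank_range_add_finrank_ker (gradMap n d N p)
    rw [finrank_Vdn] at hrn
    have hrange : Module.finrank ℂ (LinearMap.range (gradMap n d N p)) = N * (n+1) := by
      omega
    have htop : LinearMap.range (gradMap n d N p) = ⊤ :=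
      Submodule.eq_top_of_finrank_eq (by rw [hrange, finrank_pi_pi])
    have hsurj := LinearMap.range_eq_top.mp htop
    have hfact : ∀ f : Vdn n d, piMap n N (gradMap n d N p f) = tauMap n d N (rhoMap n d f) := by
      intro f
      funext j i
      show eval (p j) (pderiv (emb n i) (f : MvPolynomial (Fin (n+1)) ℂ)) = _
      exact factor_eval hn d _ ((mem_homogeneousSubmodule _ _).mp f.2) ((j:ℕ):ℂ) i
    have htausurj : Function.Surjective ⇑(tauMap n d N) := by
      intro y
      obtain ⟨y', hy'⟩ := piMap_surjective hn N y
      obtain ⟨f, hf⟩ := hsurj y'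
      refine ⟨rhoMap n d f, ?_⟩
      rw [← hfact, hf, hy']
    have h1 : Module.finrank ℂ (LinearMap.range (tauMap n d N)) = N * 2 := by
      rw [LinearMap.range_eq_top.mpr htausurj, finrank_top, finrank_pi_pi]
    have h2 := LinearMap.finrank_range_le (tauMap n d N)
    rw [h1, Module.finrank_pi] at h2
    simp only [Fintype.card_fin] at h2
    omega
end

section
/- Let n ≥ 1, N ≥ 1, and let p_1,…,p_N ∈ ℂ^{n+1} be nonzero, pairwise non-proportional vectors. Let I ⊆ ℂ[x_0,…,x_n] be the ideal of all polynomials vanishing at every scalar multiple of each p_j (the homogeneous vanishing ideal of the N corresponding points of ℙ^n). Then for every d ≥ 2N−1, the intersection I² ∩ V_{d,n} (the degree-d graded piece of the ideal I²) is a linear subspace of codimension exactly N(n+1) in V_{d,n}; equivalently, the degree-d graded piece of the quotient ring ℂ[x_0,…,x_n]/I² has complex dimension N(n+1). -/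
open MvPolynomial


/-- The homogeneous vanishing ideal of the `N` points `[p 0], …, [p (N-1)]` of `ℙⁿ`:
all polynomials vanishing at every scalar multiple of every `p j`. -/
noncomputable def vanishingIdealPoints {n N : ℕ} (p : Fin N → (Fin (n+1) → ℂ)) :
    Ideal (MvPolynomial (Fin (n+1)) ℂ) where
  carrier := {g | ∀ j, ∀ t : ℂ, MvPolynomial.eval (t • p j) g = 0}
  zero_mem' := by intro j t; simp
  add_mem' := by intro a b ha hb j t; simp [map_add, ha j t, hb j t]
  smul_mem' := by intro c g hg j t; simp [smul_eq_mul, map_mul, hg j t]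

namespace SqVanish

variable {n N : ℕ}

noncomputable abbrev Poly (n : ℕ) := MvPolynomial (Fin (n+1)) ℂ

/-- linear form associated to a coefficient vector -/
noncomputable def lin (w : Fin (n+1) → ℂ) : Poly n := ∑ i, C (w i) * X i

/-- pairing -/
noncomputable def dip (w q : Fin (n+1) → ℂ) : ℂ := ∑ i, w i * q i

lemma eval_lin (q w : Fin (n+1) → ℂ) : eval q (lin w) = dip w q := by
  simp [lin, dip]

lemma eval_smul_lin (q w : Fin (n+1) → ℂ) (t : ℂ) :
    eval (t • q) (lin w) = t * dip w q := by
  rw [eval_lin, dip, dip, Finset.mul_sum]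
  refine Finset.sum_congr rfl fun i _ => ?_
  simp [mul_comm, mul_assoc, mul_left_comm]

lemma lin_homog (w : Fin (n+1) → ℂ) : (lin w).IsHomogeneous 1 :=
  IsHomogeneous.sum _ _ _ fun i _ => isHomogeneous_C_mul_X _ _

lemma lin_zero : lin (0 : Fin (n+1) → ℂ) = 0 := by simp [lin]

lemma lin_add (v w : Fin (n+1) → ℂ) : lin (v + w) = lin v + lin w := by
  simp [lin, Finset.sum_add_distrib, add_mul]

lemma lin_smul (c : ℂ) (w : Fin (n+1) → ℂ) : lin (c • w) = C c * lin w := by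
  simp [lin, Finset.mul_sum, mul_assoc]

lemma lin_sub (v w : Fin (n+1) → ℂ) : lin (v - w) = lin v - lin w := by
  simp [lin, Finset.sum_sub_distrib, sub_mul]

lemma lin_split (w a : Fin (n+1) → ℂ) (c : ℂ) :
    lin w = C c * lin a + lin (w - c • a) := by
  rw [lin_sub, lin_smul]; ring

lemma pderiv_lin (i : Fin (n+1)) (w : Fin (n+1) → ℂ) :
    pderiv i (lin w) = C (w i) := by
  classical
  rw [lin, map_sum]
  rw [Finset.sum_eq_single i]
  · simp
  · intro j _ hj
    simp [pderiv_X_of_ne hj]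
  · simp

/-- product of linear forms attached to a multiset of vectors -/
noncomputable def prodLin (M : Multiset (Fin (n+1) → ℂ)) : Poly n := (M.map lin).prod

lemma prodLin_zero : prodLin (0 : Multiset (Fin (n+1) → ℂ)) = 1 := rfl

lemma prodLin_cons (w : Fin (n+1) → ℂ) (M : Multiset (Fin (n+1) → ℂ)) :
    prodLin (w ::ₘ M) = lin w * prodLin M := by
  simp [prodLin]

lemma prodLin_add (M M' : Multiset (Fin (n+1) → ℂ)) :
    prodLin (M + M') = prodLin M * prodLin M' := by
  simp [prodLin]

lemma prodLin_nsmul_single (q : ℕ) (w : Fin (n+1) → ℂ) :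
    prodLin (q • ({w} : Multiset (Fin (n+1) → ℂ))) = (lin w) ^ q := by
  induction q with
  | zero => simp [prodLin_zero]
  | succ k ih => rw [succ_nsmul, prodLin_add, ih, pow_succ, prodLin]; simp

lemma prodLin_finset {α : Type*} (s : Finset α) (f : α → (Fin (n+1) → ℂ)) :
    prodLin (s.val.map f) = ∏ a ∈ s, lin (f a) := by
  rw [prodLin, Multiset.map_map, Finset.prod_eq_multiset_prod]
  rfl

lemma prodLin_homog (M : Multiset (Fin (n+1) → ℂ)) :
    (prodLin M).IsHomogeneous (Multiset.card M) := by
  induction M using Multiset.induction with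
  | empty => simpa [prodLin_zero] using isHomogeneous_one (Fin (n+1)) ℂ
  | cons w M ih =>
    rw [prodLin_cons]
    simpa [add_comm] using (lin_homog w).mul ih

lemma dip_add (v w q : Fin (n+1) → ℂ) : dip (v + w) q = dip v q + dip w q := by
  simp [dip, add_mul, Finset.sum_add_distrib]

lemma dip_sub (v w q : Fin (n+1) → ℂ) : dip (v - w) q = dip v q - dip w q := by
  simp [dip, sub_mul, Finset.sum_sub_distrib]

lemma dip_smul (c : ℂ) (w q : Fin (n+1) → ℂ) : dip (c • w) q = c * dip w q := by
  simp [dip, Finset.mul_sum, mul_assoc]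

lemma dip_single (i₀ : Fin (n+1)) (q : Fin (n+1) → ℂ) :
    dip ((Pi.single i₀ 1 : Fin (n+1) → ℂ)) q = q i₀ := by
  simp [dip, Pi.single_apply, ite_mul, Finset.sum_ite_eq']

/-- vanishing ideal of the points indexed by `A` -/
noncomputable def IA (p : Fin N → (Fin (n+1) → ℂ)) (A : Finset (Fin N)) : Ideal (Poly n) where
  carrier := {g | ∀ j ∈ A, ∀ t : ℂ, eval (t • p j) g = 0}
  zero_mem' := by intro j hj t; simp
  add_mem' := by intro a b ha hb j hj t; simp [map_add, ha j hj t, hb j hj t]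
  smul_mem' := by intro c g hg j hj t; simp [smul_eq_mul, map_mul, hg j hj t]

lemma mem_IA_iff {p : Fin N → (Fin (n+1) → ℂ)} {A : Finset (Fin N)} {g : Poly n} :
    g ∈ IA p A ↔ ∀ j ∈ A, ∀ t : ℂ, eval (t • p j) g = 0 := Iff.rfl

lemma mem_IA_of_factor {p : Fin N → (Fin (n+1) → ℂ)} {A : Finset (Fin N)} {f : Poly n}
    (h : ∀ j ∈ A, ∃ w, ∃ g : Poly n, f = lin w * g ∧ dip w (p j) = 0) : f ∈ IA p A := by
  intro j hj t
  obtain ⟨w, g, hf, hw⟩ := h j hj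
  rw [hf, map_mul, eval_smul_lin, hw, mul_zero, zero_mul]

lemma mul_mem_IA_sq {p : Fin N → (Fin (n+1) → ℂ)} {A : Finset (Fin N)} {f g : Poly n}
    (hf : f ∈ IA p A) (hg : g ∈ IA p A) : f * g ∈ (IA p A) ^ 2 := by
  rw [pow_two]; exact Ideal.mul_mem_mul hf hg

/-- existence of a linear form vanishing at `p k` but not at `p j` -/
lemma exists_u (p : Fin N → (Fin (n+1) → ℂ)) (hp0 : ∀ j, p j ≠ 0)
    (hpdist : ∀ j j', j ≠ j' → ∀ c : ℂ, p j ≠ c • p j') {j k : Fin N} (hjk : j ≠ k) :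
    ∃ w, dip w (p k) = 0 ∧ dip w (p j) ≠ 0 := by
  by_contra hcon
  push_neg at hcon
  obtain ⟨i₀, hi₀⟩ : ∃ i₀, p k i₀ ≠ 0 := by
    by_contra h; push_neg at h; exact hp0 k (funext h)
  apply hpdist j k hjk (p j i₀ / p k i₀)
  funext i
  have hw := hcon (p k i₀ • (Pi.single i 1 : Fin (n+1) → ℂ) - p k i • (Pi.single i₀ 1 : Fin (n+1) → ℂ))
  have hdipk : dip (p k i₀ • (Pi.single i 1 : Fin (n+1) → ℂ) - p k i • (Pi.single i₀ 1 : Fin (n+1) → ℂ)) (p k) = 0 := by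
    rw [dip_sub, dip_smul, dip_smul, dip_single, dip_single]; ring
  have hdipj := hw hdipk
  rw [dip_sub, dip_smul, dip_smul, dip_single, dip_single] at hdipj
  show p j i = (p j i₀ / p k i₀) * p k i
  field_simp
  linear_combination hdipj

/-- existence of a linear form nonvanishing at all the points -/
lemma exists_wm (p : Fin N → (Fin (n+1) → ℂ)) (hp0 : ∀ j, p j ≠ 0) :
    ∃ w, ∀ j, dip w (p j) ≠ 0 := by
  suffices h : ∀ s : Finset (Fin N), ∃ w, ∀ j ∈ s, dip w (p j) ≠ 0 by
    obtain ⟨w, hw⟩ := h Finset.univ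
    exact ⟨w, fun j => hw j (Finset.mem_univ j)⟩
  intro s
  induction s using Finset.induction with
  | empty => exact ⟨0, by simp⟩
  | @insert a s ha ih =>
    obtain ⟨w, hw⟩ := ih
    obtain ⟨i₀, hi₀⟩ : ∃ i₀, p a i₀ ≠ 0 := by
      by_contra h; push_neg at h; exact hp0 a (funext h)
    have hwa : dip ((Pi.single i₀ 1 : Fin (n+1) → ℂ)) (p a) ≠ 0 := by rwa [dip_single]
    have hfin : (⋃ j ∈ (insert a s : Finset (Fin N)),
        {c : ℂ | dip w (p j) + c * dip ((Pi.single i₀ 1 : Fin (n+1) → ℂ)) (p j) = 0}).Finite := by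
      refine Set.Finite.biUnion (Finset.finite_toSet _) (fun j hj => ?_)
      by_cases hz : dip ((Pi.single i₀ 1 : Fin (n+1) → ℂ)) (p j) = 0
      · have hz' : dip w (p j) ≠ 0 := by
          rcases Finset.mem_insert.mp hj with rfl | hjs
          · exact absurd hz hwa
          · exact hw j hjs
        refine Set.finite_empty.subset ?_
        intro c hc
        simp only [Set.mem_setOf_eq, hz, mul_zero, add_zero] at hc
        exact absurd hc hz'
      · refine (Set.finite_singleton (-(dip w (p j)) / dip ((Pi.single i₀ 1 : Fin (n+1) → ℂ)) (p j))).subset ?_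
        intro c hc
        simp only [Set.mem_setOf_eq] at hc
        simp only [Set.mem_singleton_iff]
        field_simp
        linear_combination hc
    obtain ⟨c, hc⟩ := hfin.infinite_compl.nonempty
    refine ⟨w + c • (Pi.single i₀ 1 : Fin (n+1) → ℂ), fun j hj => ?_⟩
    intro h0
    apply hc
    refine Set.mem_biUnion hj ?_
    rw [dip_add, dip_smul] at h0
    exact h0

section Part3
variable {n N : ℕ}

/-- product of the chosen separator forms: vanishes at `p k'` for `k' ∈ A.erase k`. -/
noncomputable def LL (u : Fin N → Fin N → (Fin (n+1) → ℂ)) (A : Finset (Fin N)) (k : Fin N) :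
    Poly n := ∏ k' ∈ A.erase k, lin (u k k')

noncomputable def QQ (u : Fin N → Fin N → (Fin (n+1) → ℂ)) (wm : Fin (n+1) → ℂ)
    (A : Finset (Fin N)) (k : Fin N) (d : ℕ) : Poly n :=
  (LL u A k) ^ 2 * (lin wm) ^ (d + 1 - 2 * A.card)

noncomputable def linM : (Fin (n+1) → ℂ) →ₗ[ℂ] Poly n where
  toFun := lin
  map_add' := lin_add
  map_smul' := fun c w => by
    show lin (c • w) = c • lin w
    rw [lin_smul, MvPolynomial.smul_eq_C_mul]

noncomputable def Phi (u : Fin N → Fin N → (Fin (n+1) → ℂ)) (wm : Fin (n+1) → ℂ)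
    (A : Finset (Fin N)) (d : ℕ) : (Fin N → (Fin (n+1) → ℂ)) →ₗ[ℂ] Poly n :=
  ∑ k ∈ A, (LinearMap.mulLeft ℂ (QQ u wm A k d)).comp (linM.comp (LinearMap.proj k))

lemma Phi_apply (u : Fin N → Fin N → (Fin (n+1) → ℂ)) (wm : Fin (n+1) → ℂ)
    (A : Finset (Fin N)) (d : ℕ) (W : Fin N → (Fin (n+1) → ℂ)) :
    Phi u wm A d W = ∑ k ∈ A, QQ u wm A k d * lin (W k) := by
  simp [Phi, linM, LinearMap.sum_apply]

noncomputable def TA (u : Fin N → Fin N → (Fin (n+1) → ℂ)) (wm : Fin (n+1) → ℂ)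
    (A : Finset (Fin N)) (d : ℕ) : Submodule ℂ (Poly n) :=
  LinearMap.range (Phi u wm A d)

lemma mem_TA (u : Fin N → Fin N → (Fin (n+1) → ℂ)) (wm : Fin (n+1) → ℂ)
    {A : Finset (Fin N)} {k : Fin N} (hk : k ∈ A) (d : ℕ) (w : Fin (n+1) → ℂ) :
    QQ u wm A k d * lin w ∈ TA u wm A d := by
  classical
  refine ⟨Pi.single k w, ?_⟩
  rw [Phi_apply, Finset.sum_eq_single_of_mem k hk]
  · rw [Pi.single_eq_same]
  · intro b _ hbk
    rw [Pi.single_eq_of_ne hbk, lin_zero, mul_zero]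

lemma LL_homog (u : Fin N → Fin N → (Fin (n+1) → ℂ)) (A : Finset (Fin N)) (k : Fin N) :
    (LL u A k).IsHomogeneous (A.erase k).card := by
  have := MvPolynomial.IsHomogeneous.prod (A.erase k) (fun k' => lin (u k k'))
    (fun _ => 1) (fun k' _ => lin_homog (u k k'))
  simpa [LL] using this

lemma QQ_lin_homog (u : Fin N → Fin N → (Fin (n+1) → ℂ)) (wm : Fin (n+1) → ℂ)
    {A : Finset (Fin N)} {k : Fin N} (hk : k ∈ A) {d : ℕ} (h2 : 2 * A.card ≤ d + 1)
    (w : Fin (n+1) → ℂ) : (QQ u wm A k d * lin w).IsHomogeneous d := by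
  have h1 : (QQ u wm A k d).IsHomogeneous
      ((A.erase k).card * 2 + 1 * (d + 1 - 2 * A.card)) := by
    rw [QQ]; exact ((LL_homog u A k).pow 2).mul ((lin_homog wm).pow _)
  have h2' := h1.mul (lin_homog w)
  have hcard : (A.erase k).card = A.card - 1 := Finset.card_erase_of_mem hk
  have hA1 : 1 ≤ A.card := Finset.card_pos.mpr ⟨k, hk⟩
  have : (A.erase k).card * 2 + 1 * (d + 1 - 2 * A.card) + 1 = d := by
    rw [hcard]; omega
  rwa [this] at h2'

lemma TA_le_Vdn (u : Fin N → Fin N → (Fin (n+1) → ℂ)) (wm : Fin (n+1) → ℂ)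
    {A : Finset (Fin N)} {d : ℕ} (h2 : 2 * A.card ≤ d + 1) :
    TA u wm A d ≤ Vdn n d := by
  rintro _ ⟨W, rfl⟩
  rw [Phi_apply]
  exact Submodule.sum_mem _ (fun k hk => QQ_lin_homog u wm hk h2 (W k))

lemma eval_sq_mul {q : Fin (n+1) → ℂ} {l R : Poly n} (h : eval q l = 0) :
    eval q (l ^ 2 * R) = 0 ∧ ∀ i, eval q (pderiv i (l ^ 2 * R)) = 0 := by
  constructor
  · rw [map_mul, map_pow, h]; ring
  · intro i
    rw [sq, pderiv_mul, pderiv_mul]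
    simp [map_add, map_mul, h]

lemma jets_of_sq {p : Fin N → (Fin (n+1) → ℂ)} {A : Finset (Fin N)} {f : Poly n}
    (hf : f ∈ (IA p A) ^ 2) {k : Fin N} (hk : k ∈ A) :
    eval (p k) f = 0 ∧ ∀ i, eval (p k) (pderiv i f) = 0 := by
  rw [pow_two] at hf
  refine Submodule.mul_induction_on hf ?_ ?_
  · intro g hg h hh
    have hg0 : eval (p k) g = 0 := by have := hg k hk 1; rwa [one_smul] at this
    have hh0 : eval (p k) h = 0 := by have := hh k hk 1; rwa [one_smul] at this
    constructor
    · rw [map_mul, hg0, zero_mul]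
    · intro i
      rw [pderiv_mul, map_add, map_mul, map_mul, hg0, hh0]; ring
  · intro x y hx hy
    exact ⟨by rw [map_add, hx.1, hy.1, add_zero],
      fun i => by rw [map_add, map_add, hx.2 i, hy.2 i, add_zero]⟩

section Jets

variable {p : Fin N → (Fin (n+1) → ℂ)} {u : Fin N → Fin N → (Fin (n+1) → ℂ)}
  {wm : Fin (n+1) → ℂ}

lemma QQ_jets_ne {A : Finset (Fin N)} {d : ℕ}
    (hu : ∀ j k, j ≠ k → dip (u j k) (p k) = 0 ∧ dip (u j k) (p j) ≠ 0)
    {k' k : Fin N} (hk'A : k' ∈ A) (hkA : k ∈ A) (hne : k' ≠ k) (w : Fin (n+1) → ℂ) :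
    eval (p k) (QQ u wm A k' d * lin w) = 0 ∧
      ∀ i, eval (p k) (pderiv i (QQ u wm A k' d * lin w)) = 0 := by
  classical
  have hkmem : k ∈ A.erase k' := Finset.mem_erase.mpr ⟨hne.symm, hkA⟩
  have hdec : QQ u wm A k' d * lin w =
      (lin (u k' k)) ^ 2 * ((∏ k'' ∈ (A.erase k').erase k, lin (u k' k'')) ^ 2 *
        (lin wm) ^ (d + 1 - 2 * A.card) * lin w) := by
    rw [QQ, LL, ← Finset.mul_prod_erase _ _ hkmem]; ring
  have hev : eval (p k) (lin (u k' k)) = 0 := by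
    rw [eval_lin]; exact (hu k' k hne).1
  rw [hdec]
  exact eval_sq_mul hev

lemma eval_QQ_self {A : Finset (Fin N)} {d : ℕ}
    (hu : ∀ j k, j ≠ k → dip (u j k) (p k) = 0 ∧ dip (u j k) (p j) ≠ 0)
    (hwm : ∀ j, dip wm (p j) ≠ 0) {k : Fin N} :
    eval (p k) (QQ u wm A k d) ≠ 0 := by
  rw [QQ, map_mul, map_pow, map_pow, eval_lin]
  apply mul_ne_zero
  · apply pow_ne_zero
    rw [LL, map_prod]
    apply Finset.prod_ne_zero_iff.mpr
    intro k' hk'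
    rw [eval_lin]
    exact (hu k k' (Finset.ne_of_mem_erase hk').symm).2
  · exact pow_ne_zero _ (hwm k)

lemma W_eq_zero_of_jets {A : Finset (Fin N)} {d : ℕ}
    (hu : ∀ j k, j ≠ k → dip (u j k) (p k) = 0 ∧ dip (u j k) (p j) ≠ 0)
    (hwm : ∀ j, dip wm (p j) ≠ 0) (W : Fin N → (Fin (n+1) → ℂ))
    (hjets : ∀ k ∈ A, eval (p k) (Phi u wm A d W) = 0 ∧
      ∀ i, eval (p k) (pderiv i (Phi u wm A d W)) = 0) :
    ∀ k ∈ A, W k = 0 := by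
  classical
  intro k hk
  have hsum := (hjets k hk).1
  rw [Phi_apply, map_sum, Finset.sum_eq_single_of_mem k hk] at hsum
  swap
  · intro b hb hbk
    exact (QQ_jets_ne hu hb hk hbk (W b)).1
  rw [map_mul, eval_lin] at hsum
  have hQk : eval (p k) (QQ u wm A k d) ≠ 0 := eval_QQ_self hu hwm
  have hdip : dip (W k) (p k) = 0 := by
    rcases mul_eq_zero.mp hsum with h | h
    · exact absurd h hQk
    · exact h
  funext i
  have hsum2 := (hjets k hk).2 i
  rw [Phi_apply, map_sum, map_sum, Finset.sum_eq_single_of_mem k hk] at hsum2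
  swap
  · intro b hb hbk
    exact (QQ_jets_ne hu hb hk hbk (W b)).2 i
  rw [pderiv_mul, pderiv_lin, map_add, map_mul, map_mul, eval_lin, hdip, mul_zero,
    zero_add, eval_C] at hsum2
  rcases mul_eq_zero.mp hsum2 with h | h
  · exact absurd h hQk
  · exact h

lemma Phi_injective {d : ℕ}
    (hu : ∀ j k, j ≠ k → dip (u j k) (p k) = 0 ∧ dip (u j k) (p j) ≠ 0)
    (hwm : ∀ j, dip wm (p j) ≠ 0) :
    Function.Injective (Phi u wm (Finset.univ : Finset (Fin N)) d) := by
  rw [injective_iff_map_eq_zero]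
  intro W hW
  funext k
  have := W_eq_zero_of_jets hu hwm W (fun k _ => by rw [hW]; simp) k (Finset.mem_univ k)
  rw [this]; rfl

lemma TA_inf_sq {d : ℕ}
    (hu : ∀ j k, j ≠ k → dip (u j k) (p k) = 0 ∧ dip (u j k) (p j) ≠ 0)
    (hwm : ∀ j, dip wm (p j) ≠ 0) {x : Poly n}
    (hx : x ∈ (IA p (Finset.univ : Finset (Fin N))) ^ 2)
    (hxT : x ∈ TA u wm Finset.univ d) : x = 0 := by
  obtain ⟨W, rfl⟩ := hxT
  have hW : ∀ k ∈ (Finset.univ : Finset (Fin N)), W k = 0 :=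
    W_eq_zero_of_jets hu hwm W (fun k hkk =>
      ⟨(jets_of_sq hx hkk).1, (jets_of_sq hx hkk).2⟩)
  have : W = 0 := funext fun k => hW k (Finset.mem_univ k)
  rw [this, map_zero]

end Jets
end Part3

section Part4
variable {n : ℕ}

lemma lin_single (i : Fin (n+1)) : lin (Pi.single i 1 : Fin (n+1) → ℂ) = X i := by
  classical
  rw [lin, Finset.sum_eq_single i]
  · rw [Pi.single_eq_same, map_one, one_mul]
  · intro b _ hbi
    rw [Pi.single_eq_of_ne hbi, map_zero, zero_mul]
  · intro h; exact absurd (Finset.mem_univ i) h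

lemma degree_eq_sum_id (α : Fin (n+1) →₀ ℕ) : α.degree = α.sum fun _ => id := rfl

lemma prodLin_monomial (α : Fin (n+1) →₀ ℕ) :
    prodLin (α.toMultiset.map (fun i => (Pi.single i 1 : Fin (n+1) → ℂ)))
      = monomial α 1 := by
  classical
  rw [prodLin, Multiset.map_map]
  have hc : (lin ∘ fun i => (Pi.single i 1 : Fin (n+1) → ℂ)) = (X : Fin (n+1) → Poly n) :=
    funext fun i => lin_single i
  rw [hc, Finsupp.toMultiset_map, Finsupp.prod_toMultiset,
    Finsupp.prod_mapDomain_index_inj (MvPolynomial.X_injective)]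
  rw [monomial_eq, map_one, one_mul]

lemma card_monomial_multiset (α : Fin (n+1) →₀ ℕ) :
    Multiset.card (α.toMultiset.map (fun i => (Pi.single i 1 : Fin (n+1) → ℂ)))
      = α.degree := by
  rw [Multiset.card_map, Finsupp.card_toMultiset, degree_eq_sum_id]

/-- the equivalence between degree-`d` exponents and `d`-element multisets -/
noncomputable def degreeEquivSym (n d : ℕ) :
    {α : Fin (n+1) →₀ ℕ // α.degree = d} ≃ Sym (Fin (n+1)) d where
  toFun := fun a => ⟨a.1.toMultiset, by
    rw [Finsupp.card_toMultiset, ← degree_eq_sum_id, a.2]⟩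
  invFun := fun s => ⟨Multiset.toFinsupp s.1, by
    rw [degree_eq_sum_id, Multiset.toFinsupp_sum_eq, s.2]⟩
  left_inv := fun a => by
    ext1; exact Finsupp.toMultiset_toFinsupp a.1
  right_inv := fun s => by
    ext1; exact Multiset.toFinsupp_toMultiset s.1

noncomputable instance degSetFintype (n d : ℕ) :
    Fintype {α : Fin (n+1) →₀ ℕ // α.degree = d} :=
  Fintype.ofEquiv _ (degreeEquivSym n d).symm

noncomputable instance degSetFintype' (n d : ℕ) :
    Fintype ↑{α : Fin (n+1) →₀ ℕ | α.degree = d} :=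
  degSetFintype n d

lemma card_degSet (n d : ℕ) :
    Fintype.card {α : Fin (n+1) →₀ ℕ // α.degree = d} = (d+n).choose n := by
  rw [Fintype.card_congr (degreeEquivSym n d), Sym.card_sym_eq_choose, Fintype.card_fin]
  have h1 : n + 1 + d - 1 = n + d := by omega
  rw [h1]
  have h2 : (n + d).choose d = (n + d).choose n := by
    rw [← Nat.choose_symm (Nat.le_add_left d n)]
    congr 1
    omega
  rw [h2, Nat.add_comm n d]

lemma finrank_Vdn (n d : ℕ) : Module.finrank ℂ (Vdn n d) = (d+n).choose n := by
  have hV : Vdn n d = MvPolynomial.restrictSupport ℂ {α : Fin (n+1) →₀ ℕ | α.degree = d} :=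
    homogeneousSubmodule_eq_finsupp_supported (Fin (n+1)) ℂ d
  rw [hV]
  rw [Module.finrank_eq_card_basis (MvPolynomial.basisRestrictSupport ℂ _)]
  exact card_degSet n d

instance : FiniteDimensional ℂ (Vdn n d : Submodule ℂ (Poly n)) := by
  have hV : Vdn n d = MvPolynomial.restrictSupport ℂ {α : Fin (n+1) →₀ ℕ | α.degree = d} :=
    homogeneousSubmodule_eq_finsupp_supported (Fin (n+1)) ℂ d
  rw [hV]
  exact Module.Finite.of_basis (MvPolynomial.basisRestrictSupport ℂ _)

end Part4

section Part5
variable {n N : ℕ}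

lemma prodLin_two_nsmul (M : Multiset (Fin (n+1) → ℂ)) :
    prodLin (2 • M) = (prodLin M) ^ 2 := by
  rw [two_smul, prodLin_add, sq]

lemma prodLin_singleton (w : Fin (n+1) → ℂ) :
    prodLin ({w} : Multiset (Fin (n+1) → ℂ)) = lin w := by
  show prodLin (w ::ₘ 0) = lin w
  rw [prodLin_cons, prodLin_zero, mul_one]

/-- the degree-`D` part of the square of the vanishing ideal of the points in `A` -/
noncomputable def SS (p : Fin N → (Fin (n+1) → ℂ)) (A : Finset (Fin N)) (D : ℕ) :
    Submodule ℂ (Poly n) :=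
  (Submodule.restrictScalars ℂ ((IA p A) ^ 2)) ⊓ Vdn n D

lemma mem_SS {p : Fin N → (Fin (n+1) → ℂ)} {A : Finset (Fin N)} {D : ℕ} {f : Poly n}
    (h1 : f ∈ (IA p A) ^ 2) (h2 : f.IsHomogeneous D) : f ∈ SS p A D :=
  Submodule.mem_inf.mpr ⟨h1, h2⟩

lemma extend_IA {p : Fin N → (Fin (n+1) → ℂ)} {A : Finset (Fin N)} {j : Fin N}
    {b : Fin (n+1) → ℂ} (hb : dip b (p j) = 0) {g : Poly n} (hg : g ∈ IA p A) :
    lin b * g ∈ IA p (insert j A) := by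
  intro j' hj' t
  rcases Finset.mem_insert.mp hj' with rfl | hj'A
  · rw [map_mul, eval_smul_lin, hb, mul_zero, zero_mul]
  · rw [map_mul, hg j' hj'A t, mul_zero]

set_option maxHeartbeats 2000000 in
theorem key (p : Fin N → (Fin (n+1) → ℂ)) (u : Fin N → Fin N → (Fin (n+1) → ℂ))
    (wm : Fin (n+1) → ℂ)
    (hu : ∀ j k, j ≠ k → dip (u j k) (p k) = 0 ∧ dip (u j k) (p j) ≠ 0)
    (hwm : ∀ j, dip wm (p j) ≠ 0) (A : Finset (Fin N)) :
    ∀ (D : ℕ), 2 * A.card ≤ D + 1 →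
      ∀ M : Multiset (Fin (n+1) → ℂ), Multiset.card M = D →
        prodLin M ∈ SS p A D ⊔ TA u wm A D := by
  classical
  induction A using Finset.induction with
  | empty =>
    intro D hD M hM
    apply Submodule.mem_sup_left
    refine mem_SS ?_ (hM ▸ prodLin_homog M)
    have h1 : prodLin M ∈ IA p ∅ := fun j' hj' _ => absurd hj' (Finset.notMem_empty j')
    have h2 : (1 : Poly n) ∈ IA p ∅ := fun j' hj' _ => absurd hj' (Finset.notMem_empty j')
    simpa [mul_one] using mul_mem_IA_sq h1 h2
  | @insert j A₀ hjA₀ IH =>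
    intro D hD M hM
    rw [Finset.card_insert_of_notMem hjA₀] at hD
    set A : Finset (Fin N) := insert j A₀ with hA
    set mp : Poly n := lin wm with hmp
    set 𝒮 : Submodule ℂ (Poly n) := SS p A D ⊔ TA u wm A D with h𝒮
    have hjmem : j ∈ A := Finset.mem_insert_self j A₀
    have smulS : ∀ (c : ℂ) {f : Poly n}, f ∈ 𝒮 → C c * f ∈ 𝒮 := by
      intro c f hf
      rw [← MvPolynomial.smul_eq_C_mul]; exact Submodule.smul_mem _ c hf
    have memSS : ∀ f g : Poly n, f ∈ IA p A → g ∈ IA p A → (f * g).IsHomogeneous D →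
        f * g ∈ 𝒮 := fun f g hf hg hh =>
      Submodule.mem_sup_left (mem_SS (mul_mem_IA_sq hf hg) hh)
    have hjk' : ∀ k ∈ A₀, j ≠ k := fun k hk h => hjA₀ (h ▸ hk)
    -- ==================== B2 ====================
    have B2 : ∀ k ∈ A₀, ∀ (q : ℕ), 2 * A₀.card + q + 1 = D →
        ∀ (β β' w : Fin (n+1) → ℂ), dip β (p j) = 0 → dip β' (p j) = 0 →
        lin β * lin β' * (LL u A₀ k) ^ 2 * mp ^ q * lin w ∈ 𝒮 := by
      intro k hkA₀ q hq β β' w hβ hβ'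
      have hjk : j ≠ k := hjk' k hkA₀
      have hkA : k ∈ A := Finset.mem_insert_of_mem hkA₀
      set v : Fin (n+1) → ℂ := u k j with hv
      have hvj : dip v (p j) = 0 := (hu k j hjk.symm).1
      have hvk : dip v (p k) ≠ 0 := (hu k j hjk.symm).2
      set L : Poly n := LL u A₀ k with hL
      have hLLins : LL u A k = lin v * L := by
        rw [hL, LL, LL, hA, Finset.erase_insert_of_ne hjk,
          Finset.prod_insert (fun h => hjA₀ (Finset.mem_of_mem_erase h))]
      have hexp : D + 1 - 2 * A.card = q := by
        rw [hA, Finset.card_insert_of_notMem hjA₀]; omega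
      have hQins : QQ u wm A k D = lin v * lin v * L ^ 2 * mp ^ q := by
        rw [QQ, hLLins, hexp, ← hmp]; ring
      have hcardL : (A₀.erase k).card = A₀.card - 1 := Finset.card_erase_of_mem hkA₀
      have hA₀pos : 1 ≤ A₀.card := Finset.card_pos.mpr ⟨k, hkA₀⟩
      have homog4 : ∀ a b c : Fin (n+1) → ℂ,
          (lin a * lin b * L ^ 2 * mp ^ q * lin c).IsHomogeneous D := by
        intro a b c
        have h := ((((lin_homog a).mul (lin_homog b)).mul
          ((LL_homog u A₀ k).pow 2)).mul ((lin_homog (n := n) wm).pow q)).mul (lin_homog c)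
        have harith : 1 + 1 + (A₀.erase k).card * 2 + 1 * q + 1 = D := by
          rw [hcardL]; omega
        rw [harith] at h
        rw [hL, hmp]
        exact h
      -- coverage helpers
      have coverLR : ∀ (a : Fin (n+1) → ℂ), dip a (p j) = 0 → dip a (p k) = 0 →
          ∀ R : Poly n, lin a * L * R ∈ IA p A := by
        intro a haj hak R
        apply mem_IA_of_factor
        intro j' hj'
        rcases Finset.mem_insert.mp hj' with rfl | hj'A₀
        · exact ⟨a, L * R, by ring, haj⟩
        · rcases eq_or_ne j' k with rfl | hj'k
          · exact ⟨a, L * R, by ring, hak⟩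
          · have hj'e : j' ∈ A₀.erase k := Finset.mem_erase.mpr ⟨hj'k, hj'A₀⟩
            refine ⟨u k j', lin a * (∏ k'' ∈ (A₀.erase k).erase j', lin (u k k'')) * R, ?_,
              (hu k j' hj'k.symm).1⟩
            rw [hL, LL, ← Finset.mul_prod_erase _ _ hj'e]; ring
      have coverL1 : ∀ (a : Fin (n+1) → ℂ), dip a (p j) = 0 → dip a (p k) = 0 →
          lin a * L ∈ IA p A := fun a haj hak => by
        simpa [mul_one] using coverLR a haj hak 1
      have cover2R : ∀ (a b : Fin (n+1) → ℂ), dip a (p j) = 0 → dip b (p k) = 0 →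
          ∀ R : Poly n, lin a * lin b * L * R ∈ IA p A := by
        intro a b haj hbk R
        apply mem_IA_of_factor
        intro j' hj'
        rcases Finset.mem_insert.mp hj' with rfl | hj'A₀
        · exact ⟨a, lin b * L * R, by ring, haj⟩
        · rcases eq_or_ne j' k with rfl | hj'k
          · exact ⟨b, lin a * L * R, by ring, hbk⟩
          · have hj'e : j' ∈ A₀.erase k := Finset.mem_erase.mpr ⟨hj'k, hj'A₀⟩
            refine ⟨u k j',
              lin a * lin b * (∏ k'' ∈ (A₀.erase k).erase j', lin (u k k'')) * R, ?_,
              (hu k j' hj'k.symm).1⟩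
            rw [hL, LL, ← Finset.mul_prod_erase _ _ hj'e]; ring
      -- ------------- crossred -------------
      have crossred : ∀ (δ w' : Fin (n+1) → ℂ), dip δ (p j) = 0 → dip δ (p k) = 0 →
          lin δ * lin v * L ^ 2 * mp ^ q * lin w' ∈ 𝒮 := by
        intro δ w' hδj hδk
        set c₃ : ℂ := dip w' (p k) / dip wm (p k) with hc₃
        set βk : Fin (n+1) → ℂ := w' - c₃ • wm with hβkdef
        have hβkk : dip βk (p k) = 0 := by
          rw [hβkdef, dip_sub, dip_smul, hc₃]
          have := hwm k
          field_simp; ring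
        have e1 : lin w' = C c₃ * lin wm + lin βk := by
          rw [hβkdef]; exact lin_split w' wm c₃
        set c₄ : ℂ := dip wm (p j) / dip (u j k) (p j) with hc₄
        set γk : Fin (n+1) → ℂ := c₄ • u j k with hγkdef
        set γj : Fin (n+1) → ℂ := wm - γk with hγjdef
        have hγkk : dip γk (p k) = 0 := by
          rw [hγkdef, dip_smul, (hu j k hjk).1, mul_zero]
        have hγjj : dip γj (p j) = 0 := by
          rw [hγjdef, dip_sub, hγkdef, dip_smul, hc₄]
          have := (hu j k hjk).2
          field_simp; ring
        set c₅ : ℂ := dip γj (p k) / dip v (p k) with hc₅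
        set δ₅ : Fin (n+1) → ℂ := γj - c₅ • v with hδ₅def
        have hδ₅j : dip δ₅ (p j) = 0 := by
          rw [hδ₅def, dip_sub, dip_smul, hγjj, hvj]; ring
        have hδ₅k : dip δ₅ (p k) = 0 := by
          rw [hδ₅def, dip_sub, dip_smul, hc₅]
          have := hvk
          field_simp; ring
        have e2 : lin wm = C c₅ * lin v + lin δ₅ + lin γk := by
          have hwmsum : wm = γj + γk := by rw [hγjdef]; abel
          have h3 : lin γj = C c₅ * lin v + lin δ₅ := by
            rw [hδ₅def]; exact lin_split γj v c₅
          calc lin wm = lin (γj + γk) := by rw [← hwmsum]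
          _ = lin γj + lin γk := lin_add γj γk
          _ = C c₅ * lin v + lin δ₅ + lin γk := by rw [h3]
        have hsplit : lin δ * lin v * L ^ 2 * mp ^ q * lin w'
            = C c₃ * (C c₅ * (QQ u wm A k D * lin δ))
            + C c₃ * ((lin δ₅ * L) * (lin v * lin δ * L * mp ^ q))
            + C c₃ * ((lin δ * L) * (lin v * lin γk * L * mp ^ q))
            + (lin δ * L) * (lin v * lin βk * L * mp ^ q) := by
          rw [hQins, hmp]
          linear_combination (lin δ * lin v * L ^ 2 * (lin wm) ^ q) * e1 +
            (C c₃ * lin δ * lin v * L ^ 2 * (lin wm) ^ q) * e2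
        rw [hsplit]
        refine Submodule.add_mem _ (Submodule.add_mem _ (Submodule.add_mem _ ?_ ?_) ?_) ?_
        · exact smulS c₃ (smulS c₅ (Submodule.mem_sup_right (mem_TA u wm hkA D δ)))
        · refine smulS c₃ (memSS _ _ (coverL1 δ₅ hδ₅j hδ₅k) (cover2R v δ hvj hδk (mp ^ q)) ?_)
          have h := homog4 δ v δ₅
          rw [show lin δ * lin v * L ^ 2 * mp ^ q * lin δ₅
            = (lin δ₅ * L) * (lin v * lin δ * L * mp ^ q) by ring] at h
          exact h
        · refine smulS c₃ (memSS _ _ (coverL1 δ hδj hδk) (cover2R v γk hvj hγkk (mp ^ q)) ?_)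
          have h := homog4 δ v γk
          rw [show lin δ * lin v * L ^ 2 * mp ^ q * lin γk
            = (lin δ * L) * (lin v * lin γk * L * mp ^ q) by ring] at h
          exact h
        · refine memSS _ _ (coverL1 δ hδj hδk) (cover2R v βk hvj hβkk (mp ^ q)) ?_
          have h := homog4 δ v βk
          rw [show lin δ * lin v * L ^ 2 * mp ^ q * lin βk
            = (lin δ * L) * (lin v * lin βk * L * mp ^ q) by ring] at h
          exact h
      -- ------------- the four terms of B2 -------------
      set c₁ : ℂ := dip β (p k) / dip v (p k) with hc₁
      set δ₁ : Fin (n+1) → ℂ := β - c₁ • v with hδ₁def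
      have hδ₁j : dip δ₁ (p j) = 0 := by
        rw [hδ₁def, dip_sub, dip_smul, hβ, hvj]; ring
      have hδ₁k : dip δ₁ (p k) = 0 := by
        rw [hδ₁def, dip_sub, dip_smul, hc₁]
        have := hvk
        field_simp; ring
      set c₂ : ℂ := dip β' (p k) / dip v (p k) with hc₂
      set δ₂ : Fin (n+1) → ℂ := β' - c₂ • v with hδ₂def
      have hδ₂j : dip δ₂ (p j) = 0 := by
        rw [hδ₂def, dip_sub, dip_smul, hβ', hvj]; ring
      have hδ₂k : dip δ₂ (p k) = 0 := by
        rw [hδ₂def, dip_sub, dip_smul, hc₂]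
        have := hvk
        field_simp; ring
      have eβ : lin β = C c₁ * lin v + lin δ₁ := by rw [hδ₁def]; exact lin_split β v c₁
      have eβ' : lin β' = C c₂ * lin v + lin δ₂ := by rw [hδ₂def]; exact lin_split β' v c₂
      have hsplit4 : lin β * lin β' * L ^ 2 * mp ^ q * lin w
          = C c₁ * (C c₂ * (QQ u wm A k D * lin w))
          + C c₂ * (lin δ₁ * lin v * L ^ 2 * mp ^ q * lin w)
          + C c₁ * (lin δ₂ * lin v * L ^ 2 * mp ^ q * lin w)
          + (lin δ₁ * L) * (lin δ₂ * L * (mp ^ q * lin w)) := by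
        rw [hQins]
        linear_combination (lin β' * L ^ 2 * mp ^ q * lin w) * eβ +
          ((C c₁ * lin v + lin δ₁) * L ^ 2 * mp ^ q * lin w) * eβ'
      rw [hsplit4]
      refine Submodule.add_mem _ (Submodule.add_mem _ (Submodule.add_mem _ ?_ ?_) ?_) ?_
      · exact smulS _ (smulS _ (Submodule.mem_sup_right (mem_TA u wm hkA D w)))
      · exact smulS c₂ (crossred δ₁ w hδ₁j hδ₁k)
      · exact smulS c₁ (crossred δ₂ w hδ₂j hδ₂k)
      · refine memSS _ _ (coverL1 δ₁ hδ₁j hδ₁k) (coverLR δ₂ hδ₂j hδ₂k (mp ^ q * lin w)) ?_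
        have h := homog4 δ₁ δ₂ w
        rw [show lin δ₁ * lin δ₂ * L ^ 2 * mp ^ q * lin w
          = (lin δ₁ * L) * (lin δ₂ * L * (mp ^ q * lin w)) by ring] at h
        exact h
    -- ==================== LemB ====================
    have LemB : ∀ (β β' : Fin (n+1) → ℂ), dip β (p j) = 0 → dip β' (p j) = 0 →
        ∀ (Θ : Multiset (Fin (n+1) → ℂ)), Multiset.card Θ + 2 = D →
        lin β * lin β' * prodLin Θ ∈ 𝒮 := by
      intro β β' hβ hβ' Θ hΘ
      have h2 : 2 * A₀.card ≤ Multiset.card Θ + 1 := by omega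
      have hmem := IH (Multiset.card Θ) h2 Θ rfl
      rw [Submodule.mem_sup] at hmem
      obtain ⟨y, hy, z, hz, hyz⟩ := hmem
      rw [show lin β * lin β' * prodLin Θ = lin β * lin β' * y + lin β * lin β' * z by
        rw [← hyz]; ring]
      refine Submodule.add_mem _ ?_ ?_
      · obtain ⟨hy1, hy2⟩ := Submodule.mem_inf.mp hy
        have hy1' : y ∈ (IA p A₀) ^ 2 := hy1
        apply Submodule.mem_sup_left
        refine mem_SS ?_ ?_
        · rw [pow_two] at hy1'
          refine Submodule.mul_induction_on
            (C := fun x => lin β * lin β' * x ∈ (IA p A) ^ 2) hy1' ?_ ?_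
          · intro g hg h hh
            rw [show lin β * lin β' * (g * h) = (lin β * g) * (lin β' * h) by ring]
            exact mul_mem_IA_sq (extend_IA hβ hg) (extend_IA hβ' hh)
          · intro x₁ x₂ hx₁ hx₂
            rw [mul_add]; exact Submodule.add_mem _ hx₁ hx₂
        · have hy2' : y.IsHomogeneous (Multiset.card Θ) := hy2
          have h := ((lin_homog β).mul (lin_homog β')).mul hy2'
          rw [show 1 + 1 + Multiset.card Θ = D by omega] at h
          exact h
      · obtain ⟨W, rfl⟩ := hz
        rw [Phi_apply, Finset.mul_sum]
        refine Submodule.sum_mem _ ?_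
        intro k hk
        have hq : 2 * A₀.card + (Multiset.card Θ + 1 - 2 * A₀.card) + 1 = D := by omega
        have hB := B2 k hk _ hq β β' (W k) hβ hβ'
        rw [show lin β * lin β' * (QQ u wm A₀ k (Multiset.card Θ) * lin (W k))
          = lin β * lin β' * (LL u A₀ k) ^ 2 *
            mp ^ (Multiset.card Θ + 1 - 2 * A₀.card) * lin (W k) by rw [QQ, ← hmp]; ring]
        exact hB
    -- ==================== terminal lemmas ====================
    have hLLj : LL u A j = ∏ k' ∈ A₀, lin (u j k') := by
      rw [LL, hA, Finset.erase_insert hjA₀]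
    have hexpA : ∀ q : ℕ, 2 * A₀.card + q + 1 = D → D + 1 - 2 * A.card = q := by
      intro q hq
      rw [hA, Finset.card_insert_of_notMem hjA₀]; omega
    have termC : ∀ (q : ℕ) (β : Fin (n+1) → ℂ), dip β (p j) = 0 →
        2 * A₀.card + q + 1 = D →
        (∏ k' ∈ A₀, lin (u j k')) ^ 2 * mp ^ q * lin β ∈ 𝒮 := by
      intro q β _ hq
      apply Submodule.mem_sup_right
      have h := mem_TA u wm hjmem D β
      rw [QQ, hLLj, hexpA q hq, ← hmp] at h
      exact h
    have termD : ∀ (q : ℕ), 2 * A₀.card + q = D →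
        (∏ k' ∈ A₀, lin (u j k')) ^ 2 * mp ^ q ∈ 𝒮 := by
      intro q hq
      have hq1 : 1 ≤ q := by omega
      have hq' : 2 * A₀.card + (q - 1) + 1 = D := by omega
      apply Submodule.mem_sup_right
      have h := mem_TA u wm hjmem D wm
      rw [QQ, hLLj, hexpA (q - 1) hq', ← hmp] at h
      rw [show (∏ k' ∈ A₀, lin (u j k')) ^ 2 * mp ^ q
        = (∏ k' ∈ A₀, lin (u j k')) ^ 2 * mp ^ (q - 1) * mp from by
          rw [mul_assoc, ← pow_succ]
          congr 2
          omega]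
      exact h
    -- ==================== lemCD ====================
    have lemCD : ∀ (t : ℕ) (Cs : Finset (Fin N)), Cs ⊆ A₀ → A₀.card - Cs.card ≤ t →
        (∀ (q : ℕ) (β : Fin (n+1) → ℂ), dip β (p j) = 0 → 2 * Cs.card + q + 1 = D →
          (∏ k' ∈ Cs, lin (u j k')) ^ 2 * mp ^ q * lin β ∈ 𝒮) ∧
        (∀ q : ℕ, 2 * Cs.card + q = D → (∏ k' ∈ Cs, lin (u j k')) ^ 2 * mp ^ q ∈ 𝒮) := by
      intro t
      induction t with
      | zero =>
        intro Cs hsub hcard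
        have hCs : Cs = A₀ := Finset.eq_of_subset_of_card_le hsub (by omega)
        subst hCs
        exact ⟨termC, termD⟩
      | succ t iht =>
        intro Cs hsub hcard
        by_cases heq : Cs = A₀
        · subst heq; exact ⟨termC, termD⟩
        · obtain ⟨k, hkA₀, hkCs⟩ := Finset.exists_of_ssubset (hsub.ssubset_of_ne heq)
          have hjk : j ≠ k := hjk' k hkA₀
          have hCslt : Cs.card < A₀.card := Finset.card_lt_card (hsub.ssubset_of_ne heq)
          have hins : insert k Cs ⊆ A₀ := Finset.insert_subset hkA₀ hsub
          have hinscard : A₀.card - (insert k Cs).card ≤ t := by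
            rw [Finset.card_insert_of_notMem hkCs]; omega
          obtain ⟨ihtC, ihtD⟩ := iht (insert k Cs) hins hinscard
          set P : Poly n := ∏ k' ∈ Cs, lin (u j k') with hP
          have hPins : (∏ k' ∈ insert k Cs, lin (u j k')) = lin (u j k) * P :=
            Finset.prod_insert hkCs
          set c₆ : ℂ := dip wm (p j) / dip (u j k) (p j) with hc₆
          set β₆ : Fin (n+1) → ℂ := wm - c₆ • u j k with hβ₆def
          have hβ₆ : dip β₆ (p j) = 0 := by
            rw [hβ₆def, dip_sub, dip_smul, hc₆]
            have := (hu j k hjk).2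
            field_simp; ring
          have esplit : mp = C c₆ * lin (u j k) + lin β₆ := by
            rw [hmp, hβ₆def]; exact lin_split wm (u j k) c₆
          have hPLa : ∀ s : ℕ, prodLin (2 • Cs.val.map (u j) + s • ({wm} : Multiset _))
              = P ^ 2 * mp ^ s := by
            intro s
            rw [prodLin_add, prodLin_two_nsmul, prodLin_finset, prodLin_nsmul_single,
              ← hmp, ← hP]
          have hPLb : ∀ s : ℕ,
              prodLin (2 • Cs.val.map (u j) + (u j k) ::ₘ s • ({wm} : Multiset _))
              = P ^ 2 * lin (u j k) * mp ^ s := by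
            intro s
            rw [prodLin_add, prodLin_two_nsmul, prodLin_finset, prodLin_cons,
              prodLin_nsmul_single, ← hmp, ← hP]; ring
          have hcarda : ∀ s : ℕ, Multiset.card
              (2 • Cs.val.map (u j) + s • ({wm} : Multiset (Fin (n+1) → ℂ)))
              = 2 * Cs.card + s := by
            intro s
            simp [mul_comm]
          have hcardb : ∀ s : ℕ, Multiset.card
              (2 • Cs.val.map (u j) + (u j k) ::ₘ s • ({wm} : Multiset (Fin (n+1) → ℂ)))
              = 2 * Cs.card + 1 + s := by
            intro s
            simp [mul_comm]
            omega
          -- ---- LemC for Cs ----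
          have hC : ∀ (q : ℕ) (β : Fin (n+1) → ℂ), dip β (p j) = 0 →
              2 * Cs.card + q + 1 = D → P ^ 2 * mp ^ q * lin β ∈ 𝒮 := by
            intro q β hβ hq
            have hq2 : 2 ≤ q := by omega
            rw [show P ^ 2 * mp ^ q * lin β
              = C c₆ * (P ^ 2 * lin (u j k) * mp ^ (q-1) * lin β)
                + lin β * lin β₆ * (P ^ 2 * mp ^ (q-1)) from by
              have h1 : mp ^ q = mp ^ (q-1) * mp := by
                rw [← pow_succ]; congr 1; omega
              rw [h1]
              linear_combination (P ^ 2 * mp ^ (q-1) * lin β) * esplit]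
            refine Submodule.add_mem _ (smulS _ ?_) ?_
            · rw [show P ^ 2 * lin (u j k) * mp ^ (q-1) * lin β
                = C c₆ * ((lin (u j k) * P) ^ 2 * mp ^ (q-2) * lin β)
                  + lin β * lin β₆ * (P ^ 2 * lin (u j k) * mp ^ (q-2)) from by
                have h1 : mp ^ (q-1) = mp ^ (q-2) * mp := by
                  rw [← pow_succ]; congr 1; omega
                rw [h1]
                linear_combination (P ^ 2 * lin (u j k) * mp ^ (q-2) * lin β) * esplit]
              refine Submodule.add_mem _ (smulS _ ?_) ?_
              · have h := ihtC (q-2) β hβ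
                  (by rw [Finset.card_insert_of_notMem hkCs]; omega)
                rw [hPins] at h
                exact h
              · have h := LemB β β₆ hβ hβ₆ _ (by rw [hcardb (q-2)]; omega)
                rw [hPLb (q-2)] at h
                exact h
            · have h := LemB β β₆ hβ hβ₆ _
                (by rw [hcarda (q-1)]; omega)
              rw [hPLa (q-1)] at h
              exact h
          -- ---- LemD for Cs ----
          have hDs : ∀ q : ℕ, 2 * Cs.card + q = D → P ^ 2 * mp ^ q ∈ 𝒮 := by
            intro q hq
            have hq3 : 3 ≤ q := by omega
            rw [show P ^ 2 * mp ^ q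
              = C c₆ * (P ^ 2 * lin (u j k) * mp ^ (q-1))
                + P ^ 2 * mp ^ (q-1) * lin β₆ from by
              have h1 : mp ^ q = mp ^ (q-1) * mp := by
                rw [← pow_succ]; congr 1; omega
              rw [h1]
              linear_combination (P ^ 2 * mp ^ (q-1)) * esplit]
            refine Submodule.add_mem _ (smulS _ ?_) (hC (q-1) β₆ hβ₆ (by omega))
            rw [show P ^ 2 * lin (u j k) * mp ^ (q-1)
              = C c₆ * ((lin (u j k) * P) ^ 2 * mp ^ (q-2))
                + P ^ 2 * lin (u j k) * mp ^ (q-2) * lin β₆ from by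
              have h1 : mp ^ (q-1) = mp ^ (q-2) * mp := by
                rw [← pow_succ]; congr 1; omega
              rw [h1]
              linear_combination (P ^ 2 * lin (u j k) * mp ^ (q-2)) * esplit]
            refine Submodule.add_mem _ (smulS _ ?_) ?_
            · have h := ihtD (q-2)
                (by rw [Finset.card_insert_of_notMem hkCs]; omega)
              rw [hPins] at h
              exact h
            · rw [show P ^ 2 * lin (u j k) * mp ^ (q-2) * lin β₆
                = C c₆ * ((lin (u j k) * P) ^ 2 * mp ^ (q-3) * lin β₆)
                  + lin β₆ * lin β₆ * (P ^ 2 * lin (u j k) * mp ^ (q-3)) from by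
                have h1 : mp ^ (q-2) = mp ^ (q-3) * mp := by
                  rw [← pow_succ]; congr 1; omega
                rw [h1]
                linear_combination (P ^ 2 * lin (u j k) * mp ^ (q-3) * lin β₆) * esplit]
              refine Submodule.add_mem _ (smulS _ ?_) ?_
              · have h := ihtC (q-3) β₆ hβ₆
                  (by rw [Finset.card_insert_of_notMem hkCs]; omega)
                rw [hPins] at h
                exact h
              · have h := LemB β₆ β₆ hβ₆ hβ₆
                  (2 • Cs.val.map (u j) + (u j k) ::ₘ (q-3) • ({wm} : Multiset _))
                  (by rw [hcardb (q-3)]; omega)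
                rw [hPLb (q-3)] at h
                exact h
          exact ⟨hC, hDs⟩
    -- ==================== mainred ====================
    have mainred : ∀ (M₂ M₁ : Multiset (Fin (n+1) → ℂ)) (q : ℕ),
        (∀ w ∈ M₁, dip w (p j) = 0) → Multiset.card M₁ + q + Multiset.card M₂ = D →
        prodLin M₁ * mp ^ q * prodLin M₂ ∈ 𝒮 := by
      intro M₂
      induction M₂ using Multiset.induction with
      | empty =>
        intro M₁ q hM₁ hcard
        rw [prodLin_zero, mul_one]
        simp only [Multiset.card_zero, add_zero] at hcard
        by_cases h0 : M₁ = 0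
        · subst h0
          have h := (lemCD A₀.card ∅ (Finset.empty_subset _) (by simp)).2 q
            (by simp; simp at hcard; omega)
          rw [Finset.prod_empty, one_pow, one_mul] at h
          rw [prodLin_zero, one_mul]
          exact h
        · obtain ⟨β, M', rfl⟩ : ∃ b t, M₁ = b ::ₘ t := by
            obtain ⟨b, hb⟩ := Multiset.exists_mem_of_ne_zero h0
            exact ⟨b, M₁.erase b, (Multiset.cons_erase hb).symm⟩
          have hβ : dip β (p j) = 0 := hM₁ β (Multiset.mem_cons_self β M')
          by_cases h0' : M' = 0
          · subst h0'
            have h := (lemCD A₀.card ∅ (Finset.empty_subset _) (by simp)).1 q β hβ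
              (by simp; simp at hcard; omega)
            rw [Finset.prod_empty, one_pow, one_mul] at h
            rw [prodLin_cons, prodLin_zero, mul_one]
            rw [show lin β * mp ^ q = mp ^ q * lin β by ring]
            exact h
          · obtain ⟨β', M'', rfl⟩ : ∃ b t, M' = b ::ₘ t := by
              obtain ⟨b, hb⟩ := Multiset.exists_mem_of_ne_zero h0'
              exact ⟨b, M'.erase b, (Multiset.cons_erase hb).symm⟩
            have hβ' : dip β' (p j) = 0 :=
              hM₁ β' (Multiset.mem_cons_of_mem (Multiset.mem_cons_self β' M''))
            have h := LemB β β' hβ hβ' (M'' + q • ({wm} : Multiset _))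
              (by rw [Multiset.card_add, Multiset.card_nsmul, Multiset.card_singleton]
                  simp at hcard; omega)
            rw [prodLin_add, prodLin_nsmul_single, ← hmp] at h
            rw [prodLin_cons, prodLin_cons]
            rw [show lin β * (lin β' * prodLin M'') * mp ^ q
              = lin β * lin β' * (prodLin M'' * mp ^ q) by ring]
            exact h
      | cons w M₂' ih =>
        intro M₁ q hM₁ hcard
        set cw : ℂ := dip w (p j) / dip wm (p j) with hcw
        set βw : Fin (n+1) → ℂ := w - cw • wm with hβwdef
        have hβw : dip βw (p j) = 0 := by
          rw [hβwdef, dip_sub, dip_smul, hcw]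
          have := hwm j
          field_simp; ring
        have ew : lin w = C cw * mp + lin βw := by
          rw [hmp, hβwdef]; exact lin_split w wm cw
        rw [prodLin_cons]
        rw [show prodLin M₁ * mp ^ q * (lin w * prodLin M₂')
          = C cw * (prodLin M₁ * mp ^ (q+1) * prodLin M₂')
            + prodLin (βw ::ₘ M₁) * mp ^ q * prodLin M₂' from by
            rw [prodLin_cons, pow_succ]
            linear_combination (prodLin M₁ * mp ^ q * prodLin M₂') * ew]
        refine Submodule.add_mem _
          (smulS _ (ih M₁ (q+1) hM₁ (by simp at hcard ⊢; omega))) ?_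
        refine ih (βw ::ₘ M₁) q ?_ (by simp at hcard ⊢; omega)
        intro x hx
        rcases Multiset.mem_cons.mp hx with rfl | hx'
        · exact hβw
        · exact hM₁ x hx'
    -- conclusion
    have h := mainred M 0 0 (by simp) (by simpa using hM)
    rw [prodLin_zero, pow_zero, one_mul, one_mul] at h
    exact h
end Part5

end SqVanish

/-- For `N` distinct points of `ℙⁿ` with homogeneous vanishing ideal `I` and any
`d ≥ 2N−1`, the degree-`d` graded piece `I² ∩ V_{d,n}` of `I²` has codimension exactly
`N(n+1)` in `V_{d,n}` (stated additively: `dim + N(n+1) = binom(d+n,n) = dim V_{d,n}`). -/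
theorem dim_degree_d_piece_of_sq_vanishingIdeal (n N d : ℕ) (hn : 1 ≤ n) (hN : 1 ≤ N)
    (hd : 2 * N - 1 ≤ d)
    (p : Fin N → (Fin (n+1) → ℂ)) (hp0 : ∀ j, p j ≠ 0)
    (hpdist : ∀ j j', j ≠ j' → ∀ c : ℂ, p j ≠ c • p j') :
    Module.finrank ℂ
        (Submodule.restrictScalars ℂ ((vanishingIdealPoints p) ^ 2) ⊓ Vdn n d :
          Submodule ℂ (MvPolynomial (Fin (n+1)) ℂ)) + N * (n+1) =
      Nat.choose (d+n) n := by
  classical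
  obtain ⟨wm, hwm⟩ := SqVanish.exists_wm p hp0
  have huex : ∀ j k : Fin N, ∃ w,
      j ≠ k → (SqVanish.dip w (p k) = 0 ∧ SqVanish.dip w (p j) ≠ 0) := by
    intro j k
    by_cases h : j = k
    · exact ⟨0, fun h' => absurd h h'⟩
    · obtain ⟨w, hw⟩ := SqVanish.exists_u p hp0 hpdist h
      exact ⟨w, fun _ => hw⟩
  choose u hu using huex
  have hIA : SqVanish.IA p Finset.univ = vanishingIdealPoints p := by
    ext g
    constructor
    · intro hg j t; exact hg j (Finset.mem_univ j) t
    · intro hg j _ t; exact hg j t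
  have h2N : 2 * (Finset.univ : Finset (Fin N)).card ≤ d + 1 := by
    rw [Finset.card_univ, Fintype.card_fin]; omega
  have hSSM : SqVanish.SS p Finset.univ d
      = Submodule.restrictScalars ℂ ((vanishingIdealPoints p) ^ 2) ⊓ Vdn n d := by
    rw [SqVanish.SS, hIA]
  -- sup = Vdn
  have hsup : SqVanish.SS p Finset.univ d ⊔ SqVanish.TA u wm Finset.univ d = Vdn n d := by
    apply le_antisymm
    · exact sup_le inf_le_right (SqVanish.TA_le_Vdn u wm h2N)
    · intro f hf
      have hf' : f.IsHomogeneous d := hf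
      rw [← MvPolynomial.support_sum_monomial_coeff f]
      refine Submodule.sum_mem _ ?_
      intro α hα
      have hcoeff : MvPolynomial.coeff α f ≠ 0 := MvPolynomial.mem_support_iff.mp hα
      have hdeg : α.degree = d := by
        rw [Finsupp.degree_eq_weight_one]
        exact hf' hcoeff
      have hmono := SqVanish.prodLin_monomial (n := n) α
      have hcard := SqVanish.card_monomial_multiset (n := n) α
      have hk := SqVanish.key p u wm hu hwm Finset.univ d h2N _ (by rw [hcard, hdeg])
      rw [hmono] at hk
      rw [show (MvPolynomial.monomial α) (MvPolynomial.coeff α f)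
          = MvPolynomial.coeff α f • (MvPolynomial.monomial α) 1 by
        rw [MvPolynomial.smul_eq_C_mul, MvPolynomial.C_mul_monomial, mul_one]]
      exact Submodule.smul_mem _ _ hk
  -- inf = ⊥
  have hinf : SqVanish.SS p Finset.univ d ⊓ SqVanish.TA u wm Finset.univ d = ⊥ := by
    rw [eq_bot_iff]
    intro x hx
    obtain ⟨hxS, hxT⟩ := Submodule.mem_inf.mp hx
    obtain ⟨hx2, _⟩ := Submodule.mem_inf.mp hxS
    have hx2' : x ∈ (SqVanish.IA p Finset.univ) ^ 2 := hx2
    have hx0 := SqVanish.TA_inf_sq hu hwm hx2' hxT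
    simp [hx0]
  -- finrank of T
  have hTrank : Module.finrank ℂ (SqVanish.TA u wm Finset.univ d) = N * (n+1) := by
    rw [SqVanish.TA, LinearMap.finrank_range_of_inj (SqVanish.Phi_injective hu hwm)]
    rw [Module.finrank_pi_fintype]
    simp [Module.finrank_pi]
  haveI inst1 : FiniteDimensional ℂ (SqVanish.SS p Finset.univ d) :=
    Submodule.finiteDimensional_of_le inf_le_right
  haveI inst2 : FiniteDimensional ℂ (SqVanish.TA u wm Finset.univ d) :=
    Submodule.finiteDimensional_of_le (SqVanish.TA_le_Vdn u wm h2N)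
  have hdim := Submodule.finrank_sup_add_finrank_inf_eq
    (SqVanish.SS p Finset.univ d) (SqVanish.TA u wm Finset.univ d)
  rw [hsup, hinf, finrank_bot, add_zero, SqVanish.finrank_Vdn n d, hTrank] at hdim
  rw [← hSSM]
  exact hdim.symm
end

section
/- Let n ≥ 1, k ≥ 1 and d ≥ 2k+1. Let p_1,…,p_k, q ∈ ℂ^{n+1} be nonzero vectors that are pairwise non-proportional (so they represent k+1 distinct points of ℙ^n). Then there exists a homogeneous polynomial f ∈ V_{d,n} that is singular at each p_j but is not singular at q. -/
open MvPolynomial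

/-- The linear form `∑ i, a i * X i` as a polynomial. -/
noncomputable def Lform {n : ℕ} (a : Fin (n+1) → ℂ) : MvPolynomial (Fin (n+1)) ℂ :=
  ∑ i, MvPolynomial.C (a i) * MvPolynomial.X i

lemma Lform_eval {n : ℕ} (a x : Fin (n+1) → ℂ) :
    MvPolynomial.eval x (Lform a) = ∑ i, a i * x i := by
  simp [Lform]

lemma Lform_pderiv {n : ℕ} (a : Fin (n+1) → ℂ) (i : Fin (n+1)) :
    MvPolynomial.pderiv i (Lform a) = MvPolynomial.C (a i) := by
  simp only [Lform, map_sum]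
  rw [Finset.sum_eq_single i]
  · simp
  · intro b _ hb
    simp [pderiv_X, Pi.single_apply, hb]
  · simp

lemma Lform_homog {n : ℕ} (a : Fin (n+1) → ℂ) : (Lform a).IsHomogeneous 1 := by
  apply MvPolynomial.IsHomogeneous.sum
  intro i _
  simpa using (MvPolynomial.isHomogeneous_X ℂ i).C_mul (a i)

/-- The "Euler operator at the point `q`". -/
noncomputable def Tq {n : ℕ} (q : Fin (n+1) → ℂ) (f : MvPolynomial (Fin (n+1)) ℂ) : ℂ :=
  ∑ i, q i * MvPolynomial.eval q (MvPolynomial.pderiv i f)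

lemma Tq_mul {n : ℕ} (q : Fin (n+1) → ℂ) (f g : MvPolynomial (Fin (n+1)) ℂ) :
    Tq q (f * g) = Tq q f * MvPolynomial.eval q g + MvPolynomial.eval q f * Tq q g := by
  simp only [Tq, pderiv_mul, map_add, map_mul, Finset.mul_sum, Finset.sum_mul,
    ← Finset.sum_add_distrib]
  apply Finset.sum_congr rfl
  intro i _
  ring

lemma Tq_pow_of_eval_one {n : ℕ} (q : Fin (n+1) → ℂ) (f : MvPolynomial (Fin (n+1)) ℂ)
    (hf : MvPolynomial.eval q f = 1) (m : ℕ) : Tq q (f ^ m) = m * Tq q f := by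
  induction m with
  | zero => simp [Tq]
  | succ m ih =>
      rw [pow_succ, Tq_mul, ih, hf, map_pow, hf]
      push_cast
      ring

lemma Tq_prod_of_eval_one {n k : ℕ} (q : Fin (n+1) → ℂ)
    (g : Fin k → MvPolynomial (Fin (n+1)) ℂ) (hg : ∀ j, MvPolynomial.eval q (g j) = 1) :
    Tq q (∏ j, g j) = ∑ j, Tq q (g j) := by
  classical
  induction (Finset.univ : Finset (Fin k)) using Finset.induction with
  | empty => simp [Tq]
  | insert _ _ hnot ih =>
      rw [Finset.prod_insert hnot, Finset.sum_insert hnot, Tq_mul, ih, hg,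
        MvPolynomial.eval_prod]
      simp [hg]

/-- Given `k+1` distinct points `[p 0], …, [p (k-1)], [q]` of `ℙⁿ` and `d ≥ 2k+1`, there is
a homogeneous polynomial of degree `d` singular at each `p j` but non-singular at `q`. -/
theorem exists_homogeneous_singular_at_points_not_at (n k d : ℕ) (hn : 1 ≤ n) (hk : 1 ≤ k)
    (hd : 2 * k + 1 ≤ d)
    (p : Fin k → (Fin (n+1) → ℂ)) (q : Fin (n+1) → ℂ)
    (hp0 : ∀ j, p j ≠ 0) (hq0 : q ≠ 0)
    (hpdist : ∀ j j', j ≠ j' → ∀ c : ℂ, p j ≠ c • p j')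
    (hq : ∀ j, ∀ c : ℂ, q ≠ c • p j) :
    ∃ f : MvPolynomial (Fin (n+1)) ℂ, f.IsHomogeneous d ∧
      (∀ j, SingularAt f (p j)) ∧ ¬ SingularAt f q := by
  classical
  -- choose, for each j, a linear functional vanishing at `p j` with value 1 at `q`
  have hφ : ∀ j : Fin k, ∃ a : Fin (n+1) → ℂ,
      (∑ i, a i * p j i) = 0 ∧ (∑ i, a i * q i) = 1 := by
    intro j
    have hqs : q ∉ Submodule.span ℂ {p j} := by
      intro hmem
      rw [Submodule.mem_span_singleton] at hmem
      obtain ⟨c, hc⟩ := hmem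
      exact hq j c hc.symm
    obtain ⟨φ, hφq, hφp⟩ :=
      Submodule.exists_dual_map_eq_bot_of_notMem hqs inferInstance
    have hpj : φ (p j) = 0 := by
      have : φ (p j) ∈ Submodule.map φ (Submodule.span ℂ {p j}) :=
        Submodule.mem_map_of_mem (Submodule.mem_span_singleton_self _)
      rw [hφp] at this
      simpa using this
    have key : ∀ x : Fin (n+1) → ℂ,
        φ x = ∑ i, φ (fun t => if i = t then 1 else 0) * x i := by
      intro x
      conv_lhs => rw [pi_eq_sum_univ x]
      rw [map_sum]
      apply Finset.sum_congr rfl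
      intro i _
      rw [map_smul, smul_eq_mul, mul_comm]
    refine ⟨fun i => (φ q)⁻¹ * φ (fun t => if i = t then 1 else 0), ?_, ?_⟩
    · calc (∑ i, (φ q)⁻¹ * φ (fun t => if i = t then 1 else 0) * p j i)
          = (φ q)⁻¹ * ∑ i, φ (fun t => if i = t then 1 else 0) * p j i := by
            rw [Finset.mul_sum]; apply Finset.sum_congr rfl; intros; ring
        _ = (φ q)⁻¹ * φ (p j) := by rw [← key]
        _ = 0 := by rw [hpj, mul_zero]
    · calc (∑ i, (φ q)⁻¹ * φ (fun t => if i = t then 1 else 0) * q i)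
          = (φ q)⁻¹ * ∑ i, φ (fun t => if i = t then 1 else 0) * q i := by
            rw [Finset.mul_sum]; apply Finset.sum_congr rfl; intros; ring
        _ = (φ q)⁻¹ * φ q := by rw [← key]
        _ = 1 := inv_mul_cancel₀ hφq
  choose a hap haq using hφ
  -- exponents
  set m : Fin k → ℕ := fun j => if j = ⟨0, hk⟩ then d - 2 * k + 2 else 2 with hm
  have hm2 : ∀ j, 2 ≤ m j := by
    intro j
    simp only [hm]
    split <;> omega
  have hmsum : ∑ j, m j = d := by
    have hsplit : ∀ j : Fin k, m j = 2 + (if j = ⟨0, hk⟩ then d - 2 * k else 0) := by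
      intro j; simp only [hm]; split <;> omega
    rw [Finset.sum_congr rfl fun j _ => hsplit j, Finset.sum_add_distrib,
      Finset.sum_ite_eq' Finset.univ (⟨0, hk⟩ : Fin k) (fun _ => d - 2 * k)]
    simp only [Finset.sum_const, Finset.card_univ, Fintype.card_fin, smul_eq_mul,
      Finset.mem_univ, if_true]
    omega
  set f : MvPolynomial (Fin (n+1)) ℂ := ∏ j, (Lform (a j)) ^ (m j) with hf
  have hevalq : ∀ j, MvPolynomial.eval q (Lform (a j)) = 1 := by
    intro j; rw [Lform_eval]; exact haq j
  refine ⟨f, ?_, ?_, ?_⟩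
  · -- homogeneous of degree d
    rw [hf, ← hmsum]
    exact MvPolynomial.IsHomogeneous.prod _ _ _ (fun j _ => by simpa using (Lform_homog (a j)).pow (m j))
  · -- singular at each p j
    intro j i
    have hzero : MvPolynomial.eval (p j) (Lform (a j)) = 0 := by
      rw [Lform_eval]; exact hap j
    have hfact : f = (Lform (a j)) * ((Lform (a j)) ^ (m j - 1) *
        ∏ j' ∈ Finset.univ.erase j, (Lform (a j')) ^ (m j')) := by
      rw [hf, ← Finset.mul_prod_erase Finset.univ _ (Finset.mem_univ j), ← mul_assoc,
        ← pow_succ']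
      congr 2
      have := hm2 j
      omega
    have hne : m j - 1 ≠ 0 := by have := hm2 j; omega
    rw [hfact]
    simp only [pderiv_mul, map_add, map_mul, map_pow, hzero, zero_pow hne]
    ring
  · -- not singular at q
    intro hsing
    have hT : Tq q f = 0 := by
      unfold Tq
      apply Finset.sum_eq_zero
      intro i _
      rw [hsing i, mul_zero]
    have hT' : Tq q f = (d : ℂ) := by
      rw [hf, Tq_prod_of_eval_one q _ (fun j => by rw [map_pow, hevalq, one_pow])]
      have hTL : ∀ j, Tq q (Lform (a j)) = 1 := by
        intro j
        unfold Tq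
        simp only [Lform_pderiv, MvPolynomial.eval_C]
        rw [← haq j]
        apply Finset.sum_congr rfl
        intros; ring
      calc (∑ j, Tq q ((Lform (a j)) ^ (m j)))
          = ∑ j, (m j : ℂ) := by
            apply Finset.sum_congr rfl
            intro j _
            rw [Tq_pow_of_eval_one q _ (hevalq j), hTL, mul_one]
        _ = (d : ℂ) := by rw [← hmsum]; push_cast; rfl
    rw [hT] at hT'
    have : d = 0 := by exact_mod_cast hT'.symm
    omega
end
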